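/- arXiv:2202.04707 — 2 statements merged into one kernel-verified Lean document; each statement's English description precedes it below -/
import Mathlib

section
/- If (a_n)_n is an approximately uncorrelated Gaussian ensemble, then (a_n)_n is an approximately uncorrelated triangular scheme; more precisely, it satisfies (AU1) with constants C(ℓ) = #PP(ℓ) (the number of pair partitions of [ℓ]) and (AU2) with sequences C_n^{(ℓ)} = #PP(2ℓ)/n², which are summable over n. -/
open MeasureTheory Filter Finset

noncomputable def esd {n : ℕ} (A : Matrix (Fin n) (Fin n) ℝ) : Measure ℝ :=
  if hA : A.IsHermitian then ((n : ENNReal))⁻¹ • ∑ i : Fin n, Measure.dirac (hA.eigenvalues i)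
  else 0

noncomputable def semicircle : Measure ℝ :=
  MeasureTheory.volume.withDensity fun x => ENNReal.ofReal (Real.sqrt (4 - x ^ 2) / (2 * Real.pi))

/-- Weak convergence in probability of a sequence of random measures to a fixed measure. -/
def WeakInProb {Ω : Type*} [MeasurableSpace Ω] (P : Measure Ω)
    (μ : ℕ → Ω → Measure ℝ) (ν : Measure ℝ) : Prop :=
  ∀ f : BoundedContinuousFunction ℝ ℝ, ∀ ε : ℝ, 0 < ε →
    Tendsto (fun n => P {ω | ε ≤ |(∫ x, f x ∂(μ n ω)) - ∫ x, f x ∂ν|}) atTop (nhds 0)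

/-- Weak convergence almost surely of a sequence of random measures to a fixed measure. -/
def WeakAS {Ω : Type*} [MeasurableSpace Ω] (P : Measure Ω)
    (μ : ℕ → Ω → Measure ℝ) (ν : Measure ℝ) : Prop :=
  ∀ᵐ ω ∂P, ∀ f : BoundedContinuousFunction ℝ ℝ,
    Tendsto (fun n => ∫ x, f x ∂(μ n ω)) atTop (nhds (∫ x, f x ∂ν))

/-- The index pairs `Q 1, …, Q ℓ` are fundamentally different. -/
def FundDiff {n l : ℕ} (Q : Fin l → Fin n × Fin n) : Prop :=
  ∀ i j : Fin l, i ≠ j → ({(Q i).1, (Q i).2} : Finset (Fin n)) ≠ {(Q j).1, (Q j).2}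

/-- The triangular scheme `a` is approximately uncorrelated with constants `C` and
sequences `c`: conditions (AU1) and (AU2). -/
def IsApproxUncorr {Ω : Type*} [MeasurableSpace Ω] (P : Measure Ω)
    (a : (n : ℕ) → Ω → Matrix (Fin n) (Fin n) ℝ) (C : ℕ → ℝ) (c : ℕ → ℕ → ℝ) : Prop :=
  (∀ n (ω : Ω), (a n ω).IsSymm) ∧
  (∀ (n : ℕ) (p q : Fin n), Measurable fun ω => a n ω p q) ∧
  (∀ l : ℕ, Tendsto (fun n => c l n) atTop (nhds 0)) ∧
  (∀ (n l : ℕ) (Q : Fin l → Fin n × Fin n), FundDiff Q →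
    ∀ δ : Fin l → ℕ, (∀ i, 1 ≤ δ i) →
      |∫ ω, ∏ i, a n ω (Q i).1 (Q i).2 ^ δ i ∂P| ≤
        C (∑ i, δ i) / (n : ℝ) ^ ((((Finset.univ.filter fun i => δ i = 1)).card : ℝ) / 2)) ∧
  (∀ (n l : ℕ) (Q : Fin l → Fin n × Fin n), FundDiff Q →
      |(∫ ω, ∏ i, a n ω (Q i).1 (Q i).2 ^ 2 ∂P) - 1| ≤ c l n)

/-- `b` is an `n`-bandwidth. -/
def IsBandwidth (n b : ℕ) : Prop := b = n ∨ (1 ≤ b ∧ b < n ∧ Odd b)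

/-- The index pair `(p,q)` is `b`-relevant. -/
def BRelevant (n b : ℕ) (p q : Fin n) : Prop :=
  b = n ∨ ((p : ℤ) - (q : ℤ)).natAbs ≤ (b - 1) / 2 ∨ n - (b - 1) / 2 ≤ ((p : ℤ) - (q : ℤ)).natAbs

open Classical in
/-- The periodic band matrix with bandwidth `b` based on `A`, normalized by `√b`. -/
noncomputable def bandMat {n : ℕ} (b : ℕ) (A : Matrix (Fin n) (Fin n) ℝ) :
    Matrix (Fin n) (Fin n) ℝ :=
  Matrix.of fun p q => if BRelevant n b p q then A p q / Real.sqrt b else 0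


/-- The number of pair partitions of `[l]`, counted as the number of fixed-point-free
involutions of `Fin l`. -/
noncomputable def numPP (l : ℕ) : ℕ :=
  Nat.card {p : Fin l → Fin l // (∀ i, p (p i) = i) ∧ ∀ i, p i ≠ i}

/-- The family `Y` is jointly Gaussian, centered, with covariance matrix `S`:
every linear combination is a centered real Gaussian with the corresponding variance. -/
def IsJointGaussian {Ω : Type*} [MeasurableSpace Ω] (P : Measure Ω)
    {ι : Type*} [Fintype ι] (Y : ι → Ω → ℝ) (S : ι → ι → ℝ) : Prop :=
  (∀ i, Measurable (Y i)) ∧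
  ∀ cv : ι → ℝ, Measure.map (fun ω => ∑ i, cv i * Y i ω) P =
    ProbabilityTheory.gaussianReal 0 (Real.toNNReal (∑ i, ∑ j, cv i * cv j * S i j))

/-- `a` is an approximately uncorrelated Gaussian ensemble. -/
def IsAUGaussian {Ω : Type*} [MeasurableSpace Ω] (P : Measure Ω)
    (a : (n : ℕ) → Ω → Matrix (Fin n) (Fin n) ℝ) : Prop :=
  (∀ n (ω : Ω), (a n ω).IsSymm) ∧
  ∀ n : ℕ, ∃ S : (Fin n × Fin n) → (Fin n × Fin n) → ℝ,
    -- extension by symmetry in each index pair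
    (∀ p q r s : Fin n, S (p, q) (r, s) = S (q, p) (r, s)) ∧
    (∀ p q r s : Fin n, S (p, q) (r, s) = S (p, q) (s, r)) ∧
    (∀ P1 P2 : Fin n × Fin n, S P1 P2 = S P2 P1) ∧
    -- positive definiteness (on the upper triangle)
    (∀ cv : Fin n × Fin n → ℝ, (∀ p q : Fin n, ¬ p ≤ q → cv (p, q) = 0) → cv ≠ 0 →
      0 < ∑ i, ∑ j, cv i * cv j * S i j) ∧
    -- the entries are jointly Gaussian N(0, S)
    IsJointGaussian P (fun pq ω => a n ω pq.1 pq.2) S ∧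
    (∀ P1 P2 : Fin n × Fin n, S P1 P2 = ∫ ω, a n ω P1.1 P1.2 * a n ω P2.1 P2.2 ∂P) ∧
    -- decay of correlations between fundamentally different pairs
    (∀ P1 P2 : Fin n × Fin n, ({P1.1, P1.2} : Finset (Fin n)) ≠ {P2.1, P2.2} →
      |S P1 P2| ≤ 1 / (n : ℝ)) ∧
    -- unit variances
    (∀ pq : Fin n × Fin n, S pq pq = 1)

namespace AUX
open ProbabilityTheory Real
open scoped NNReal ENNReal

def invFinset (k : ℕ) : Finset (Fin k → Fin k) :=
  univ.filter fun p => (∀ i, p (p i) = i) ∧ ∀ i, p i ≠ i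

def reps {k : ℕ} (p : Fin k → Fin k) : Finset (Fin k) := univ.filter fun i => i < p i

lemma mem_invFinset {k : ℕ} {p : Fin k → Fin k} :
    p ∈ invFinset k ↔ (∀ i, p (p i) = i) ∧ ∀ i, p i ≠ i := by
  simp [invFinset]

lemma mem_reps {k : ℕ} {p : Fin k → Fin k} {i : Fin k} : i ∈ reps p ↔ i < p i := by
  simp [reps]

lemma two_mul_card_reps {k : ℕ} {p : Fin k → Fin k} (hp : p ∈ invFinset k) :
    2 * (reps p).card = k := by
  rw [mem_invFinset] at hp
  have hcard : (reps p).card = (univ.filter fun i => p i < i).card := by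
    apply Finset.card_nbij' p p
    · intro i hi; simp only [reps, Finset.mem_coe, mem_filter, mem_univ, true_and] at hi ⊢
      rw [hp.1]; exact hi
    · intro i hi; simp only [reps, Finset.mem_coe, mem_filter, mem_univ, true_and] at hi ⊢
      rw [hp.1]; exact hi
    · intro i _; exact hp.1 i
    · intro i _; exact hp.1 i
  have hdisj : Disjoint (univ.filter fun i : Fin k => i < p i)
      (univ.filter fun i => p i < i) := by
    rw [Finset.disjoint_left]
    intro i hi hi'
    simp only [mem_filter, mem_univ, true_and] at hi hi'
    exact absurd hi (not_lt_of_gt hi')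
  have hunion : (univ.filter fun i : Fin k => i < p i) ∪ (univ.filter fun i => p i < i)
      = univ := by
    ext i; simp only [mem_union, mem_filter, mem_univ, true_and, iff_true]
    rcases lt_trichotomy i (p i) with h | h | h
    · exact Or.inl h
    · exact absurd h.symm (hp.2 i)
    · exact Or.inr h
  have := Finset.card_union_of_disjoint hdisj
  rw [hunion, card_univ, Fintype.card_fin] at this
  rw [reps] at hcard ⊢
  omega

lemma invFinset_odd {k : ℕ} (hk : Odd k) : invFinset k = ∅ := by
  rw [Finset.eq_empty_iff_forall_notMem]
  intro p hp
  have := two_mul_card_reps hp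
  rcases hk with ⟨m, hm⟩
  omega

lemma SG {k : ℕ} (T : Finset (Fin k)) :
    ∑ s ∈ (univ : Finset (Fin k)).powerset.filter (fun s => T ⊆ s),
      (-1 : ℝ) ^ (k - s.card) = if T = univ then 1 else 0 := by
  have key : ∑ s ∈ (univ : Finset (Fin k)).powerset.filter (fun s => T ⊆ s),
      (-1 : ℝ) ^ (k - s.card) = ∑ u ∈ Tᶜ.powerset, (-1:ℝ) ^ u.card := by
    apply Finset.sum_nbij' (i := fun s => sᶜ) (j := fun u => uᶜ)
    · intro s hs
      simp only [mem_filter, mem_powerset] at hs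
      simpa [Finset.mem_powerset] using Finset.compl_subset_compl.mpr hs.2
    · intro u hu
      simp only [Finset.mem_powerset] at hu
      simp only [mem_filter, mem_powerset]
      exact ⟨Finset.subset_univ _, by simpa using Finset.compl_subset_compl.mpr hu⟩
    · intro s _; exact compl_compl s
    · intro u _; exact compl_compl u
    · intro s _
      rw [Finset.card_compl, Fintype.card_fin]
  rw [key]
  have hz : ∑ u ∈ Tᶜ.powerset, (-1:ℤ) ^ u.card = if Tᶜ = ∅ then 1 else 0 :=
    Finset.sum_powerset_neg_one_pow_card
  have : ∑ u ∈ Tᶜ.powerset, (-1:ℝ) ^ u.card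
      = ((∑ u ∈ Tᶜ.powerset, (-1:ℤ) ^ u.card : ℤ) : ℝ) := by push_cast; rfl
  rw [this, hz]
  by_cases h : T = univ
  · simp [h]
  · have : Tᶜ ≠ ∅ := by
      intro hc
      exact h (by simpa using congrArg compl hc)
    simp [h, this]

lemma IE {k : ℕ} {α : Type*} [Fintype α] [DecidableEq α] (w : α → ℝ)
    (t : α → Finset (Fin k)) :
    ∑ s ∈ (univ : Finset (Fin k)).powerset,
        (-1:ℝ) ^ (k - s.card) * ∑ x ∈ univ.filter (fun x => t x ⊆ s), w x
      = ∑ x ∈ univ.filter (fun x => t x = univ), w x := by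
  have h1 : ∀ s ∈ (univ : Finset (Fin k)).powerset,
      (-1:ℝ) ^ (k - s.card) * ∑ x ∈ univ.filter (fun x => t x ⊆ s), w x
        = ∑ x : α, (if t x ⊆ s then (-1:ℝ) ^ (k - s.card) else 0) * w x := by
    intro s _
    rw [Finset.sum_filter, Finset.mul_sum]
    apply Finset.sum_congr rfl
    intro x _
    by_cases h : t x ⊆ s <;> simp [h]
  rw [Finset.sum_congr rfl h1, Finset.sum_comm]
  rw [Finset.sum_filter]
  apply Finset.sum_congr rfl
  intro x _
  rw [← Finset.sum_mul]
  have : ∑ s ∈ (univ : Finset (Fin k)).powerset,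
      (if t x ⊆ s then (-1:ℝ) ^ (k - s.card) else 0)
      = ∑ s ∈ (univ : Finset (Fin k)).powerset.filter (fun s => t x ⊆ s),
          (-1:ℝ) ^ (k - s.card) := by
    rw [Finset.sum_filter]
  rw [this, SG]
  by_cases h : t x = univ <;> simp [h]

lemma card_surj (k : ℕ) :
    (univ.filter fun x : Fin k → Fin k => Finset.image x univ = univ).card
      = k.factorial := by
  have e : {x : Fin k → Fin k // Finset.image x univ = univ} ≃ Equiv.Perm (Fin k) := by
    refine
      { toFun := fun x => Equiv.ofBijective x.1 ?_
        invFun := fun e => ⟨e, ?_⟩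
        left_inv := fun x => Subtype.ext rfl
        right_inv := fun e => Equiv.ext fun i => rfl }
    · rw [Fintype.bijective_iff_surjective_and_card]
      refine ⟨fun y => ?_, rfl⟩
      have : y ∈ Finset.image x.1 univ := by rw [x.2]; exact mem_univ y
      simpa using this
    · ext y
      simp only [Finset.mem_image, mem_univ, iff_true, true_and]
      exact ⟨e.symm y, e.apply_symm_apply y⟩
  rw [← Fintype.card_subtype, Fintype.card_congr e, Fintype.card_equiv (Equiv.refl _),
    Fintype.card_fin]

lemma polar_prod {k : ℕ} (y : Fin k → ℝ) :
    (k.factorial : ℝ) * ∏ m, y m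
      = ∑ s ∈ (univ : Finset (Fin k)).powerset,
          (-1:ℝ) ^ (k - s.card) * (∑ m ∈ s, y m) ^ k := by
  have h1 : ∀ s : Finset (Fin k), (∑ m ∈ s, y m) ^ k
      = ∑ x ∈ univ.filter (fun x : Fin k → Fin k => Finset.image x univ ⊆ s),
          ∏ i, y (x i) := by
    intro s
    rw [Finset.sum_pow']
    apply Finset.sum_congr
    · ext x
      simp [Fintype.mem_piFinset, Finset.image_subset_iff]
    · intros; rfl
  simp_rw [h1]
  rw [IE (fun x : Fin k → Fin k => ∏ i, y (x i)) (fun x => Finset.image x univ)]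
  have h2 : ∀ x ∈ univ.filter (fun x : Fin k → Fin k => Finset.image x univ = univ),
      ∏ i, y (x i) = ∏ m, y m := by
    intro x hx
    simp only [mem_filter, mem_univ, true_and] at hx
    have hbij : Function.Bijective x := by
      rw [Fintype.bijective_iff_surjective_and_card]
      refine ⟨fun z => ?_, rfl⟩
      have : z ∈ Finset.image x univ := by rw [hx]; exact mem_univ z
      simpa using this
    exact hbij.prod_comp y
  rw [Finset.sum_congr rfl h2, Finset.sum_const, card_surj, nsmul_eq_mul]

section pairs
variable {k h : ℕ}

def phi (F : Fin h → Fin k × Fin k) : Fin h × Bool → Fin k :=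
  fun mb => if mb.2 then (F mb.1).1 else (F mb.1).2

def coords (F : Fin h → Fin k × Fin k) : Finset (Fin k) :=
  univ.biUnion fun m => {(F m).1, (F m).2}

lemma coords_eq_image (F : Fin h → Fin k × Fin k) :
    coords F = Finset.image (phi F) univ := by
  ext a
  simp only [coords, mem_biUnion, mem_univ, true_and, mem_insert, mem_singleton,
    Finset.mem_image]
  constructor
  · rintro ⟨m, hm | hm⟩
    · exact ⟨(m, true), hm.symm⟩
    · exact ⟨(m, false), hm.symm⟩
  · rintro ⟨⟨m, b⟩, hm⟩
    cases b
    · exact ⟨m, Or.inr hm.symm⟩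
    · exact ⟨m, Or.inl hm.symm⟩

lemma good_bij (hk : k = 2 * h) {F : Fin h → Fin k × Fin k} (hF : coords F = univ) :
    Function.Bijective (phi F) := by
  rw [Fintype.bijective_iff_surjective_and_card]
  constructor
  · intro a
    have : a ∈ Finset.image (phi F) univ := by
      rw [← coords_eq_image, hF]; exact mem_univ a
    simpa using this
  · simp [hk, Fintype.card_prod, mul_comm]

noncomputable def pairFn (F : Fin h → Fin k × Fin k) : Fin k → Fin k :=
  if hF : Function.Bijective (phi F) then
    fun x => phi F (((Equiv.ofBijective _ hF).symm x).1, !((Equiv.ofBijective _ hF).symm x).2)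
  else id

lemma pairFn_apply {F : Fin h → Fin k × Fin k} (hF : Function.Bijective (phi F))
    (m : Fin h) (b : Bool) : pairFn F (phi F (m, b)) = phi F (m, !b) := by
  rw [pairFn, dif_pos hF]
  have : (Equiv.ofBijective _ hF).symm (phi F (m, b)) = (m, b) := by
    apply (Equiv.ofBijective _ hF).injective
    simp [Equiv.ofBijective_apply]
  rw [this]

lemma pairFn_mem_invFinset (hk : k = 2 * h) {F : Fin h → Fin k × Fin k}
    (hF : coords F = univ) : pairFn F ∈ invFinset k := by
  have hb := good_bij hk hF
  rw [mem_invFinset]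
  constructor
  · intro x
    obtain ⟨⟨m, b⟩, rfl⟩ := hb.2 x
    rw [pairFn_apply hb, pairFn_apply hb, Bool.not_not]
  · intro x hx
    obtain ⟨⟨m, b⟩, rfl⟩ := hb.2 x
    rw [pairFn_apply hb] at hx
    have := hb.1 hx
    simp at this

/-- the representative of the pair of `F m` -/
def repOf (F : Fin h → Fin k × Fin k) (m : Fin h) : Fin k :=
  if (F m).1 < (F m).2 then (F m).1 else (F m).2

lemma repOf_spec (hk : k = 2 * h) {F : Fin h → Fin k × Fin k} (hF : coords F = univ)
    (m : Fin h) : repOf F m ∈ reps (pairFn F) ∧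
      pairFn F (repOf F m) = (if (F m).1 < (F m).2 then (F m).2 else (F m).1) := by
  have hb := good_bij hk hF
  have hne : (F m).1 ≠ (F m).2 := by
    intro hcon
    have : phi F (m, true) = phi F (m, false) := by simp [phi, hcon]
    have := hb.1 this
    simp at this
  have h1 : phi F (m, true) = (F m).1 := rfl
  have h2 : phi F (m, false) = (F m).2 := rfl
  by_cases hlt : (F m).1 < (F m).2
  · have hp : pairFn F (F m).1 = (F m).2 := by
      have := pairFn_apply hb m true; simpa [phi] using this
    refine ⟨?_, ?_⟩
    · rw [mem_reps, repOf, if_pos hlt, hp]; exact hlt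
    · rw [repOf, if_pos hlt, if_pos hlt, hp]
  · have hlt' : (F m).2 < (F m).1 := lt_of_le_of_ne (not_lt.mp hlt) hne.symm
    have hp : pairFn F (F m).2 = (F m).1 := by
      have := pairFn_apply hb m false; simpa [phi] using this
    refine ⟨?_, ?_⟩
    · rw [mem_reps, repOf, if_neg hlt, hp]; exact hlt'
    · rw [repOf, if_neg hlt, if_neg hlt, hp]

lemma prod_eq_W (hk : k = 2 * h) {F : Fin h → Fin k × Fin k} (hF : coords F = univ)
    (T : Fin k → Fin k → ℝ) (hT : ∀ i j, T i j = T j i) :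
    ∏ m, T (F m).1 (F m).2 = ∏ i ∈ reps (pairFn F), T i (pairFn F i) := by
  have hb := good_bij hk hF
  apply Finset.prod_nbij (i := repOf F)
  · intro m _; exact (repOf_spec hk hF m).1
  · intro m _ m' _ hmm
    -- injectivity
    have H : ∀ m, ∃ b, repOf F m = phi F (m, b) := by
      intro m
      by_cases hlt : (F m).1 < (F m).2
      · exact ⟨true, by simp [repOf, phi, hlt]⟩
      · exact ⟨false, by simp [repOf, phi, hlt]⟩
    obtain ⟨b, hbm⟩ := H m
    obtain ⟨b', hbm'⟩ := H m'
    have heq : phi F (m, b) = phi F (m', b') := hbm.symm.trans (hmm.trans hbm')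
    exact congrArg Prod.fst (hb.1 heq)
  · -- surjectivity onto reps
    intro i hi
    obtain ⟨⟨m, b⟩, rfl⟩ := hb.2 i
    refine ⟨m, by simp, ?_⟩
    simp only [Finset.mem_coe, mem_reps] at hi
    cases b
    · -- phi F (m, false) = (F m).2 and it is < its partner (F m).1
      have : ¬ (F m).1 < (F m).2 := by
        have : pairFn F (phi F (m, false)) = phi F (m, true) := pairFn_apply hb m false
        rw [this] at hi
        simp only [phi] at hi ⊢
        exact not_lt.mpr (le_of_lt hi)
      simp [repOf, this, phi]
    · have : (F m).1 < (F m).2 := by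
        have : pairFn F (phi F (m, true)) = phi F (m, false) := pairFn_apply hb m true
        rw [this] at hi
        simpa [phi] using hi
      simp [repOf, this, phi]
  · intro m _
    by_cases hlt : (F m).1 < (F m).2
    · rw [(repOf_spec hk hF m).2, if_pos hlt, repOf, if_pos hlt]
    · rw [(repOf_spec hk hF m).2, if_neg hlt, repOf, if_neg hlt, hT]

end pairs

section pairs
variable {k h : ℕ}

/-- the finset of enumerations of the representatives -/
def enumFinset (p : Fin k → Fin k) : Finset (Fin h → Fin k) :=
  univ.filter fun σ => Function.Injective σ ∧ Finset.image σ univ = reps p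

lemma card_enumFinset (hk : k = 2 * h) {p : Fin k → Fin k} (hp : p ∈ invFinset k) :
    (enumFinset (h := h) p).card = h.factorial := by
  have hcard : (reps p).card = h := by have := two_mul_card_reps hp; omega
  have e : {σ : Fin h → Fin k // Function.Injective σ ∧ Finset.image σ univ = reps p}
      ≃ (Fin h ≃ {x // x ∈ reps p}) := by
    refine
      { toFun := fun σ => Equiv.ofBijective
          (fun m => (⟨σ.1 m, by
            have := mem_image_of_mem σ.1 (mem_univ m); rwa [σ.2.2] at this⟩ :
            {x // x ∈ reps p})) ?_
        invFun := fun e => ⟨fun m => (e m : Fin k), ?_, ?_⟩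
        left_inv := fun σ => Subtype.ext rfl
        right_inv := fun e => Equiv.ext fun m => Subtype.ext rfl }
    · constructor
      · intro m m' hmm
        exact σ.2.1 (congrArg Subtype.val hmm)
      · rintro ⟨x, hx⟩
        rw [← σ.2.2] at hx
        obtain ⟨m, -, rfl⟩ := Finset.mem_image.mp hx
        exact ⟨m, rfl⟩
    · intro m m' hmm
      exact (e.injective (Subtype.ext hmm))
    · ext x
      simp only [Finset.mem_image, mem_univ, true_and]
      constructor
      · rintro ⟨m, rfl⟩; exact (e m).2
      · intro hx; exact ⟨e.symm ⟨x, hx⟩, by rw [Equiv.apply_symm_apply]⟩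
  have : Fintype.card {x // x ∈ reps p} = h := by
    rw [Fintype.card_coe]; exact hcard
  rw [enumFinset, ← Fintype.card_subtype, Fintype.card_congr e,
    Fintype.card_equiv (Fintype.equivFinOfCardEq this).symm, Fintype.card_fin]

def buildF (p : Fin k → Fin k) (σ : Fin h → Fin k) (e : Fin h → Bool) :
    Fin h → Fin k × Fin k :=
  fun m => if e m then (σ m, p (σ m)) else (p (σ m), σ m)

lemma card_fiber (hk : k = 2 * h) {p : Fin k → Fin k} (hp : p ∈ invFinset k) :
    ((univ.filter fun F : Fin h → Fin k × Fin k => coords F = univ).filter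
        fun F => pairFn F = p).card = h.factorial * 2 ^ h := by
  rw [mem_invFinset] at hp
  have key : ((univ.filter fun F : Fin h → Fin k × Fin k => coords F = univ).filter
      fun F => pairFn F = p).card
      = ((enumFinset (h := h) p) ×ˢ (univ : Finset (Fin h → Bool))).card := by
    apply Finset.card_nbij'
      (i := fun F => (repOf F, fun m => decide ((F m).1 < (F m).2)))
      (j := fun se => buildF p se.1 se.2)
    · -- forward maps to target
      intro F hF
      simp only [Finset.mem_coe, mem_filter, mem_univ, true_and] at hF
      obtain ⟨hgood, hpF⟩ := hF
      have hb := good_bij hk hgood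
      simp only [Finset.mem_coe, Finset.mem_product, mem_univ, and_true, enumFinset, mem_filter, true_and]
      constructor
      · -- injective
        intro m m' hmm
        have H : ∀ m, ∃ b, repOf F m = phi F (m, b) := by
          intro m
          by_cases hlt : (F m).1 < (F m).2
          · exact ⟨true, by simp [repOf, phi, hlt]⟩
          · exact ⟨false, by simp [repOf, phi, hlt]⟩
        obtain ⟨b, hbm⟩ := H m
        obtain ⟨b', hbm'⟩ := H m'
        exact congrArg Prod.fst (hb.1 (hbm.symm.trans (hmm.trans hbm')))
      · -- image = reps p
        apply Finset.eq_of_subset_of_card_le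
        · intro x hx
          obtain ⟨m, -, rfl⟩ := Finset.mem_image.mp hx
          rw [← hpF]
          exact (repOf_spec hk hgood m).1
        · have hinj : Function.Injective (repOf F) := by
            intro m m' hmm
            have H : ∀ m, ∃ b, repOf F m = phi F (m, b) := by
              intro m
              by_cases hlt : (F m).1 < (F m).2
              · exact ⟨true, by simp [repOf, phi, hlt]⟩
              · exact ⟨false, by simp [repOf, phi, hlt]⟩
            obtain ⟨b, hbm⟩ := H m
            obtain ⟨b', hbm'⟩ := H m'
            exact congrArg Prod.fst (hb.1 (hbm.symm.trans (hmm.trans hbm')))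
          rw [Finset.card_image_of_injective _ hinj, card_univ, Fintype.card_fin]
          have hpinv : p ∈ invFinset k := mem_invFinset.mpr hp
          have := two_mul_card_reps hpinv
          omega
    · -- backward maps into fiber
      rintro ⟨σ, e⟩ hse
      simp only [Finset.mem_coe, Finset.mem_product, mem_univ, and_true, enumFinset, mem_filter,
        true_and] at hse
      obtain ⟨hinj, himg⟩ := hse
      have hσreps : ∀ m, σ m ∈ reps p := by
        intro m; rw [← himg]; exact mem_image_of_mem _ (mem_univ m)
      have hσlt : ∀ m, σ m < p (σ m) := fun m => mem_reps.mp (hσreps m)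
      have hgood : coords (buildF p σ e) = univ := by
        apply Finset.eq_univ_of_forall
        intro x
        simp only [coords, mem_biUnion, mem_univ, true_and, mem_insert, mem_singleton]
        have hxcase : x ∈ reps p ∨ p x ∈ reps p := by
          rcases lt_trichotomy x (p x) with hlt | heq | hgt
          · exact Or.inl (mem_reps.mpr hlt)
          · exact absurd heq.symm (hp.2 x)
          · refine Or.inr (mem_reps.mpr ?_)
            rw [hp.1]; exact hgt
        rcases hxcase with hx | hx
        · rw [← himg] at hx
          obtain ⟨m, -, rfl⟩ := Finset.mem_image.mp hx
          refine ⟨m, ?_⟩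
          by_cases hem : e m <;> simp [buildF, hem]
        · rw [← himg] at hx
          obtain ⟨m, -, hm⟩ := Finset.mem_image.mp hx
          have hxm : x = p (σ m) := by rw [hm, hp.1]
          refine ⟨m, ?_⟩
          by_cases hem : e m <;> simp [buildF, hem, hxm]
      simp only [Finset.mem_coe, mem_filter, mem_univ, true_and]
      refine ⟨hgood, ?_⟩
      -- pairFn (buildF p σ e) = p
      have hb := good_bij hk hgood
      funext x
      obtain ⟨⟨m, b⟩, rfl⟩ := hb.2 x
      rw [pairFn_apply hb]
      by_cases hem : e m
      · have hBm : buildF p σ e m = (σ m, p (σ m)) := by simp [buildF, hem]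
        cases b <;> simp [phi, hBm, hp.1]
      · have hBm : buildF p σ e m = (p (σ m), σ m) := by simp [buildF, hem]
        cases b <;> simp [phi, hBm, hp.1]
    · -- j ∘ i = id on fiber
      intro F hF
      simp only [Finset.mem_coe, mem_filter, mem_univ, true_and] at hF
      obtain ⟨hgood, hpF⟩ := hF
      have hb := good_bij hk hgood
      funext m
      have hne : (F m).1 ≠ (F m).2 := by
        intro hcon
        have : phi F (m, true) = phi F (m, false) := by simp [phi, hcon]
        have := hb.1 this
        simp at this
      by_cases hlt : (F m).1 < (F m).2
      · have hrep : repOf F m = (F m).1 := by rw [repOf, if_pos hlt]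
        have hpair : pairFn F ((F m).1) = (F m).2 := by
          have := pairFn_apply hb m true; simpa [phi] using this
        show buildF p (repOf F) (fun m => decide ((F m).1 < (F m).2)) m = F m
        simp only [buildF, decide_eq_true_eq, hrep]
        rw [if_pos hlt, ← hpF, hpair]
      · have hlt' : (F m).2 < (F m).1 := lt_of_le_of_ne (not_lt.mp hlt) hne.symm
        have hrep : repOf F m = (F m).2 := by rw [repOf, if_neg hlt]
        have hpair : pairFn F ((F m).2) = (F m).1 := by
          have := pairFn_apply hb m false; simpa [phi] using this
        show buildF p (repOf F) (fun m => decide ((F m).1 < (F m).2)) m = F m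
        simp only [buildF, decide_eq_true_eq, hrep]
        rw [if_neg hlt, ← hpF, hpair]
    · -- i ∘ j = id
      rintro ⟨σ, e⟩ hse
      simp only [Finset.mem_coe, Finset.mem_product, mem_univ, and_true, enumFinset, mem_filter,
        true_and] at hse
      obtain ⟨hinj, himg⟩ := hse
      have hσlt : ∀ m, σ m < p (σ m) := by
        intro m
        apply mem_reps.mp
        rw [← himg]; exact mem_image_of_mem _ (mem_univ m)
      have hrep : repOf (buildF p σ e) = σ := by
        funext m
        by_cases hem : e m
        · simp [repOf, buildF, hem, hσlt m]
        · simp [repOf, buildF, hem, not_lt.mpr (le_of_lt (hσlt m))]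
      have hdec : (fun m => decide (((buildF p σ e) m).1 < ((buildF p σ e) m).2)) = e := by
        funext m
        by_cases hem : e m
        · simp [buildF, hem, hσlt m]
        · simp [buildF, hem, not_lt.mpr (le_of_lt (hσlt m))]
      exact Prod.ext hrep hdec
  rw [key, Finset.card_product, card_enumFinset hk (mem_invFinset.mpr hp), card_univ]
  simp [Fintype.card_fun]

lemma polar_pairs (hk : k = 2 * h) (T : Fin k → Fin k → ℝ) (hT : ∀ i j, T i j = T j i) :
    ∑ s ∈ (univ : Finset (Fin k)).powerset,
        (-1:ℝ) ^ (k - s.card) * (∑ i ∈ s, ∑ j ∈ s, T i j) ^ h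
      = (h.factorial : ℝ) * 2 ^ h * ∑ p ∈ invFinset k, ∏ i ∈ reps p, T i (p i) := by
  have h1 : ∀ s : Finset (Fin k), (∑ i ∈ s, ∑ j ∈ s, T i j) ^ h
      = ∑ F ∈ univ.filter (fun F : Fin h → Fin k × Fin k => coords F ⊆ s),
          ∏ m, T (F m).1 (F m).2 := by
    intro s
    rw [← Finset.sum_product' (s := s) (t := s) (f := fun i j => T i j), Finset.sum_pow']
    apply Finset.sum_congr
    · ext F
      simp only [Fintype.mem_piFinset, Finset.mem_product, mem_filter, mem_univ, true_and,
        coords, Finset.biUnion_subset]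
      constructor
      · intro hF m _
        intro x hx
        simp only [mem_insert, mem_singleton] at hx
        rcases hx with rfl | rfl
        · exact (hF m).1
        · exact (hF m).2
      · intro hF m
        have := hF m trivial
        exact ⟨this (by simp), this (by simp)⟩
    · intros; rfl
  simp_rw [h1]
  rw [IE (fun F : Fin h → Fin k × Fin k => ∏ m, T (F m).1 (F m).2) (fun F => coords F)]
  rw [← Finset.sum_fiberwise_of_maps_to (g := fun F => pairFn F) (t := invFinset k)
    (fun F hF => pairFn_mem_invFinset hk (by simpa using hF))]
  rw [Finset.mul_sum]
  apply Finset.sum_congr rfl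
  intro p hp
  have hterm : ∀ F ∈ (univ.filter fun F : Fin h → Fin k × Fin k => coords F = univ).filter
      (fun F => pairFn F = p), ∏ m, T (F m).1 (F m).2 = ∏ i ∈ reps p, T i (p i) := by
    intro F hF
    simp only [mem_filter, mem_univ, true_and] at hF
    rw [prod_eq_W hk hF.1 T hT, hF.2]
  rw [Finset.sum_congr rfl hterm, Finset.sum_const, card_fiber hk hp, nsmul_eq_mul]
  push_cast
  ring

end pairs


lemma integrable_pow_exp {b : ℝ} (hb : 0 < b) (m : ℕ) :
    Integrable fun x : ℝ => x ^ m * Real.exp (-b * x ^ 2) := by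
  have h := integrable_rpow_mul_exp_neg_mul_sq hb (s := (m : ℝ))
    (by exact_mod_cast neg_one_lt_zero.trans_le (Nat.cast_nonneg m))
  simpa [Real.rpow_natCast] using h

lemma rec_step {b : ℝ} (hb : 0 < b) (m : ℕ) :
    ∫ x : ℝ, x ^ (m + 2) * Real.exp (-b * x ^ 2)
      = ((m : ℝ) + 1) / (2 * b) * ∫ x : ℝ, x ^ m * Real.exp (-b * x ^ 2) := by
  have hu : ∀ x : ℝ, HasDerivAt (fun x : ℝ => x ^ (m + 1))
      (((m : ℝ) + 1) * x ^ m) x := by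
    intro x
    have := hasDerivAt_pow (m + 1) x
    simpa [Nat.cast_add] using this
  have hv : ∀ x : ℝ, HasDerivAt (fun x : ℝ => -(2 * b)⁻¹ * Real.exp (-b * x ^ 2))
      (x * Real.exp (-b * x ^ 2)) x := by
    intro x
    have h1 : HasDerivAt (fun x : ℝ => -b * x ^ 2) (-b * (2 * x)) x := by
      have := (hasDerivAt_pow 2 x).const_mul (-b)
      simpa using this
    have h2 := (h1.exp).const_mul (-(2 * b)⁻¹)
    refine h2.congr_deriv ?_
    field_simp
  have key := integral_mul_deriv_eq_deriv_mul_of_integrable (fun x _ => hu x) (fun x _ => hv x) ?_ ?_ ?_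
  · have e1 : ∫ x : ℝ, x ^ (m + 1) * (x * Real.exp (-b * x ^ 2))
        = ∫ x : ℝ, x ^ (m + 2) * Real.exp (-b * x ^ 2) := by
      congr 1; funext x; ring
    have e2 : ∫ x : ℝ, ((m : ℝ) + 1) * x ^ m * (-(2 * b)⁻¹ * Real.exp (-b * x ^ 2))
        = -(((m : ℝ) + 1) / (2 * b)) * ∫ x : ℝ, x ^ m * Real.exp (-b * x ^ 2) := by
      rw [← integral_const_mul]
      congr 1; funext x; field_simp
    rw [e1, e2] at key
    rw [key]; ring
  · apply Integrable.congr (integrable_pow_exp hb (m + 2))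
    filter_upwards with x
    simp only [Pi.mul_apply]
    ring
  · apply Integrable.congr ((integrable_pow_exp hb m).const_mul (((m:ℝ)+1) * (-(2 * b)⁻¹)))
    filter_upwards with x
    simp only [Pi.mul_apply]
    ring
  · apply Integrable.congr ((integrable_pow_exp hb (m+1)).const_mul (-(2 * b)⁻¹))
    filter_upwards with x
    simp only [Pi.mul_apply]
    ring

lemma gaussianPDFReal_eq (v : ℝ≥0) (x : ℝ) :
    gaussianPDFReal 0 v x
      = (Real.sqrt (2 * Real.pi * v))⁻¹ * Real.exp (-(2 * (v:ℝ))⁻¹ * x ^ 2) := by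
  rw [gaussianPDFReal]
  congr 1
  rw [sub_zero]
  congr 1
  rw [div_eq_mul_inv]
  ring

lemma integral_fun_gaussianReal {v : ℝ≥0} (hv : v ≠ 0) (f : ℝ → ℝ) :
    ∫ x, f x ∂(gaussianReal 0 v) = ∫ x, gaussianPDFReal 0 v x * f x := by
  rw [gaussianReal_of_var_ne_zero 0 hv]
  have hmg : Measurable fun x => (gaussianPDFReal 0 v x).toNNReal :=
    (measurable_gaussianPDFReal 0 v).real_toNNReal
  have : (gaussianPDF 0 v) = fun x => ((gaussianPDFReal 0 v x).toNNReal : ℝ≥0∞) := by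
    funext x; rw [gaussianPDF, ENNReal.ofReal]
  rw [this, integral_withDensity_eq_integral_smul hmg]
  congr 1
  funext x
  rw [NNReal.smul_def, smul_eq_mul, Real.coe_toNNReal _ (gaussianPDFReal_nonneg 0 v x)]

lemma integrable_pow_gaussianReal (v : ℝ≥0) (k : ℕ) :
    Integrable (fun x : ℝ => x ^ k) (gaussianReal 0 v) := by
  by_cases hv : v = 0
  · rw [hv, gaussianReal_zero_var]
    exact (integrable_const ((0:ℝ) ^ k)).congr (ae_eq_dirac fun x : ℝ => x ^ k).symm
  · rw [gaussianReal_of_var_ne_zero 0 hv]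
    have hmg : Measurable fun x => (gaussianPDFReal 0 v x).toNNReal :=
      (measurable_gaussianPDFReal 0 v).real_toNNReal
    have hrw : (gaussianPDF 0 v) = fun x => ((gaussianPDFReal 0 v x).toNNReal : ℝ≥0∞) := by
      funext x; rw [gaussianPDF, ENNReal.ofReal]
    rw [hrw, integrable_withDensity_iff_integrable_smul hmg]
    have hb : 0 < (2 * (v:ℝ))⁻¹ := by
      have : 0 < (v:ℝ) := by positivity
      positivity
    apply Integrable.congr (((integrable_pow_exp hb k).const_mul
      ((Real.sqrt (2 * Real.pi * v))⁻¹)))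
    filter_upwards with x
    rw [NNReal.smul_def, smul_eq_mul, Real.coe_toNNReal _ (gaussianPDFReal_nonneg 0 v x),
      gaussianPDFReal_eq]
    ring

lemma odd_moment (v : ℝ≥0) {k : ℕ} (hk : Odd k) :
    ∫ x, x ^ k ∂(gaussianReal 0 v) = 0 := by
  have hmap : Measure.map (fun x : ℝ => (-1 : ℝ) * x) (gaussianReal 0 v)
      = gaussianReal 0 v := by
    rw [gaussianReal_map_const_mul (-1)]
    norm_num
  have h1 : ∫ x, x ^ k ∂(gaussianReal 0 v)
      = ∫ x, ((-1 : ℝ) * x) ^ k ∂(gaussianReal 0 v) := by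
    conv_lhs => rw [← hmap]
    rw [integral_map]
    · exact (measurable_const_mul _).aemeasurable
    · exact (measurable_id.pow_const k).aestronglyMeasurable
  have h2 : ∫ x, ((-1 : ℝ) * x) ^ k ∂(gaussianReal 0 v)
      = -∫ x, x ^ k ∂(gaussianReal 0 v) := by
    rw [← integral_neg]
    congr 1
    funext x
    rw [mul_pow, hk.neg_one_pow]
    ring
  have := h1.trans h2
  linarith

lemma even_moment (v : ℝ≥0) (h : ℕ) :
    ∫ x, x ^ (2 * h) ∂(gaussianReal 0 v)
      = ((2 * h - 1).doubleFactorial : ℝ) * (v : ℝ) ^ h := by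
  induction h with
  | zero => simp
  | succ n ih =>
    by_cases hv : v = 0
    · rw [hv, gaussianReal_zero_var, integral_dirac]
      simp [zero_pow, Nat.mul_succ]
    · have hvpos : 0 < (v:ℝ) := by positivity
      have hb : 0 < (2 * (v:ℝ))⁻¹ := by positivity
      set b := (2 * (v:ℝ))⁻¹ with hbdef
      set c := (Real.sqrt (2 * Real.pi * v))⁻¹ with hcdef
      have hJ : ∀ m : ℕ, ∫ x, x ^ m ∂(gaussianReal 0 v)
          = c * ∫ x : ℝ, x ^ m * Real.exp (-b * x ^ 2) := by
        intro m
        rw [integral_fun_gaussianReal hv, ← integral_const_mul]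
        congr 1
        funext x
        rw [gaussianPDFReal_eq]
        ring
      have h2 : 2 * (n + 1) = 2 * n + 2 := by ring
      rw [h2, hJ (2 * n + 2), rec_step hb (2 * n), ← mul_assoc, mul_comm c, mul_assoc,
        ← hJ (2 * n), ih]
      have hdiv : (((2 * n : ℕ) : ℝ) + 1) / (2 * b) = (((2 * n : ℕ) : ℝ) + 1) * (v : ℝ) := by
        rw [hbdef]
        field_simp
      rw [hdiv]
      have hdf : ((2 * n + 2 - 1).doubleFactorial : ℝ)
          = (((2 * n : ℕ) : ℝ) + 1) * ((2 * n - 1).doubleFactorial : ℝ) := by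
        have h3 : 2 * n + 2 - 1 = 2 * n + 1 := by omega
        rw [h3, Nat.doubleFactorial_add_one]
        push_cast
        ring
      rw [hdf]
      push_cast
      ring


lemma fact_eq (h : ℕ) :
    (2 * h).factorial = (2 * h - 1).doubleFactorial * (2 ^ h * h.factorial) := by
  cases h with
  | zero => rfl
  | succ n =>
    have h1 : 2 * (n + 1) = (2 * (n + 1) - 1) + 1 := by omega
    have h2 := Nat.factorial_eq_mul_doubleFactorial (2 * (n + 1) - 1)
    rw [← h1] at h2
    rw [h2, Nat.doubleFactorial_two_mul]
    ring

lemma sum_card_mul {ι : Type*} [Fintype ι] [DecidableEq ι] {β : Type*}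
    (s : Finset β) (g : β → ι) (f : ι → ℝ) :
    ∑ i, ((s.filter fun m => g m = i).card : ℝ) * f i = ∑ m ∈ s, f (g m) := by
  calc ∑ i, ((s.filter fun m => g m = i).card : ℝ) * f i
      = ∑ i, ∑ m ∈ s.filter (fun m => g m = i), f i := by
        apply Finset.sum_congr rfl
        intro i _
        rw [Finset.sum_const, nsmul_eq_mul]
    _ = ∑ i, ∑ m ∈ s.filter (fun m => g m = i), f (g m) := by
        apply Finset.sum_congr rfl
        intro i _
        apply Finset.sum_congr rfl
        intro m hm
        rw [(Finset.mem_filter.mp hm).2]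
    _ = ∑ m ∈ s, f (g m) :=
        Finset.sum_fiberwise_of_maps_to (fun m _ => mem_univ (g m)) _

theorem wick {Ω : Type*} [MeasurableSpace Ω] (P : Measure Ω) [IsProbabilityMeasure P]
    {ι : Type*} [Fintype ι] [DecidableEq ι] (Y : ι → Ω → ℝ) (S : ι → ι → ℝ)
    (hJG : IsJointGaussian P Y S)
    (hS : ∀ i j, S i j = ∫ ω, Y i ω * Y j ω ∂P)
    {k : ℕ} (g : Fin k → ι) :
    ∫ ω, ∏ m, Y (g m) ω ∂P
      = ∑ p ∈ invFinset k, ∏ i ∈ reps p, S (g i) (g (p i)) := by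
  classical
  obtain ⟨hmeas, hlaw⟩ := hJG
  set Z : (ι → ℝ) → Ω → ℝ := fun cv ω => ∑ i, cv i * Y i ω with hZdef
  set Qv : (ι → ℝ) → ℝ := fun cv => ∑ i, ∑ j, cv i * cv j * S i j with hQdef
  have hZmeas : ∀ cv, Measurable (Z cv) := by
    intro cv
    apply Finset.measurable_sum
    intro i _
    exact (hmeas i).const_mul _
  have hint_pow : ∀ (cv : ι → ℝ) (m : ℕ), Integrable (fun ω => (Z cv ω) ^ m) P := by
    intro cv m
    have h1 : Integrable (fun x : ℝ => x ^ m) (Measure.map (Z cv) P) := by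
      rw [hlaw cv]
      exact integrable_pow_gaussianReal _ m
    have := (integrable_map_measure ((measurable_id.pow_const m).aestronglyMeasurable)
      (hZmeas cv).aemeasurable).mp h1
    exact this
  have hmoment : ∀ (cv : ι → ℝ) (m : ℕ), ∫ ω, (Z cv ω) ^ m ∂P
      = ∫ x, x ^ m ∂(gaussianReal 0 (Real.toNNReal (Qv cv))) := by
    intro cv m
    rw [← hlaw cv]
    exact (integral_map (hZmeas cv).aemeasurable
      ((continuous_pow m).measurable.aestronglyMeasurable)).symm
  -- single coordinates are Gaussian; squares and products are integrable
  have hsingle : ∀ i, Y i = Z (fun j => if j = i then 1 else 0) := by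
    intro i
    funext ω
    rw [hZdef]
    simp [ite_mul]
  have hsq : ∀ i, Integrable (fun ω => Y i ω ^ 2) P := by
    intro i
    have := hint_pow (fun j => if j = i then 1 else 0) 2
    rw [← hsingle i] at this
    exact this
  have hprod : ∀ i j, Integrable (fun ω => Y i ω * Y j ω) P := by
    intro i j
    apply Integrable.mono' (((hsq i).add (hsq j)).div_const 2)
    · exact ((hmeas i).mul (hmeas j)).aestronglyMeasurable
    · filter_upwards with ω
      simp only [Pi.add_apply]
      rw [Real.norm_eq_abs, abs_mul]
      nlinarith [sq_nonneg (|Y i ω| - |Y j ω|), sq_abs (Y i ω), sq_abs (Y j ω),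
        abs_nonneg (Y i ω), abs_nonneg (Y j ω)]
  have hQint : ∀ cv : ι → ℝ, Qv cv = ∫ ω, (Z cv ω) ^ 2 ∂P := by
    intro cv
    have hZsq : ∀ ω, (Z cv ω) ^ 2 = ∑ i, ∑ j, cv i * cv j * (Y i ω * Y j ω) := by
      intro ω
      rw [hZdef, sq, Finset.sum_mul_sum]
      apply Finset.sum_congr rfl
      intro i _
      apply Finset.sum_congr rfl
      intro j _
      ring
    have hint2 : ∀ i j : ι, Integrable (fun ω => cv i * cv j * (Y i ω * Y j ω)) P :=
      fun i j => (hprod i j).const_mul _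
    calc Qv cv = ∑ i, ∑ j, cv i * cv j * ∫ ω, Y i ω * Y j ω ∂P := by
          rw [hQdef]
          exact Finset.sum_congr rfl fun i _ => Finset.sum_congr rfl fun j _ => by
            rw [← hS i j]
      _ = ∑ i, ∑ j, ∫ ω, cv i * cv j * (Y i ω * Y j ω) ∂P := by
          exact Finset.sum_congr rfl fun i _ => Finset.sum_congr rfl fun j _ =>
            (integral_const_mul _ _).symm
      _ = ∫ ω, ∑ i, ∑ j, cv i * cv j * (Y i ω * Y j ω) ∂P := by
          rw [integral_finset_sum _
            (fun i _ => integrable_finset_sum _ (fun j _ => hint2 i j))]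
          exact Finset.sum_congr rfl fun i _ =>
            (integral_finset_sum _ (fun j _ => hint2 i j)).symm
      _ = ∫ ω, (Z cv ω) ^ 2 ∂P := by
          congr 1
          funext ω
          rw [hZsq ω]
  have hQnn : ∀ cv : ι → ℝ, 0 ≤ Qv cv := by
    intro cv
    rw [hQint cv]
    exact integral_nonneg fun ω => sq_nonneg _
  have hSsym : ∀ i j, S i j = S j i := by
    intro i j
    rw [hS i j, hS j i]
    congr 1
    funext ω
    ring
  -- the subsets
  set cvs : Finset (Fin k) → ι → ℝ :=
    fun s i => ((s.filter fun m => g m = i).card : ℝ) with hcvs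
  have hZs : ∀ (s : Finset (Fin k)) (ω : Ω), Z (cvs s) ω = ∑ m ∈ s, Y (g m) ω := by
    intro s ω
    rw [hZdef]
    exact sum_card_mul s g (fun i => Y i ω)
  have hQs : ∀ s : Finset (Fin k), Qv (cvs s) = ∑ m ∈ s, ∑ m' ∈ s, S (g m) (g m') := by
    intro s
    rw [hQdef]
    calc ∑ i, ∑ j, cvs s i * cvs s j * S i j
        = ∑ i, cvs s i * ∑ j, cvs s j * S i j := by
          apply Finset.sum_congr rfl
          intro i _
          rw [Finset.mul_sum]
          apply Finset.sum_congr rfl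
          intro j _
          ring
      _ = ∑ i, cvs s i * ∑ m' ∈ s, S i (g m') := by
          apply Finset.sum_congr rfl
          intro i _
          rw [sum_card_mul s g (fun j => S i j)]
      _ = ∑ m ∈ s, ∑ m' ∈ s, S (g m) (g m') :=
          sum_card_mul s g (fun i => ∑ m' ∈ s, S i (g m'))
  -- polarization
  have hfac : (k.factorial : ℝ) ≠ 0 := by
    exact_mod_cast Nat.factorial_ne_zero k
  have hpt : (fun ω => ∏ m, Y (g m) ω)
      = fun ω => (k.factorial : ℝ)⁻¹ * ∑ s ∈ (univ : Finset (Fin k)).powerset,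
          (-1:ℝ) ^ (k - s.card) * (Z (cvs s) ω) ^ k := by
    funext ω
    have := polar_prod (fun m => Y (g m) ω)
    simp_rw [hZs]
    rw [← this, ← mul_assoc, inv_mul_cancel₀ hfac, one_mul]
  have hmain : ∫ ω, ∏ m, Y (g m) ω ∂P
      = (k.factorial : ℝ)⁻¹ * ∑ s ∈ (univ : Finset (Fin k)).powerset,
          (-1:ℝ) ^ (k - s.card) * ∫ ω, (Z (cvs s) ω) ^ k ∂P := by
    rw [hpt, integral_const_mul, integral_finset_sum _
      (fun s _ => (hint_pow (cvs s) k).const_mul _)]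
    congr 1
    exact Finset.sum_congr rfl fun s _ => integral_const_mul _ _
  rcases Nat.even_or_odd k with hk | hk
  · -- even case
    obtain ⟨h, hh'⟩ := hk
    have hh : k = 2 * h := by omega
    have hzk : ∀ s : Finset (Fin k), ∫ ω, (Z (cvs s) ω) ^ k ∂P
        = ((2 * h - 1).doubleFactorial : ℝ) * (Qv (cvs s)) ^ h := by
      intro s
      rw [hmoment, hh, even_moment, Real.coe_toNNReal _ (hQnn (cvs s))]
    rw [hmain]
    have : ∑ s ∈ (univ : Finset (Fin k)).powerset,
        (-1:ℝ) ^ (k - s.card) * ∫ ω, (Z (cvs s) ω) ^ k ∂P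
        = ((2 * h - 1).doubleFactorial : ℝ) * ∑ s ∈ (univ : Finset (Fin k)).powerset,
            (-1:ℝ) ^ (k - s.card) * (Qv (cvs s)) ^ h := by
      rw [Finset.mul_sum]
      apply Finset.sum_congr rfl
      intro s _
      rw [hzk s]
      ring
    rw [this]
    have hps := polar_pairs hh (fun m m' => S (g m) (g m')) (fun i j => hSsym _ _)
    simp_rw [hQs]
    rw [hps]
    have hfact : (k.factorial : ℝ)
        = ((2 * h - 1).doubleFactorial : ℝ) * (2 ^ h * (h.factorial : ℝ)) := by
      rw [hh]
      exact_mod_cast congrArg (Nat.cast (R := ℝ)) (fact_eq h)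
    rw [hfact]
    have hd : ((2 * h - 1).doubleFactorial : ℝ) ≠ 0 := by
      exact_mod_cast (Nat.doubleFactorial_pos _).ne'
    have hf2 : ((h.factorial : ℝ)) ≠ 0 := by exact_mod_cast Nat.factorial_ne_zero h
    field_simp
  · -- odd case
    rw [hmain]
    have : ∀ s ∈ (univ : Finset (Fin k)).powerset,
        (-1:ℝ) ^ (k - s.card) * ∫ ω, (Z (cvs s) ω) ^ k ∂P = 0 := by
      intro s _
      rw [hmoment, odd_moment _ hk, mul_zero]
    rw [Finset.sum_congr rfl this, Finset.sum_const, invFinset_odd hk]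
    simp


lemma numPP_eq (l : ℕ) : numPP l = (invFinset l).card := by
  classical
  rw [numPP, Nat.card_eq_fintype_card, Fintype.card_subtype, invFinset]

lemma numPP_zero : numPP 0 = 1 := by
  rw [numPP, Nat.card_eq_fintype_card]
  rw [Fintype.card_eq_one_iff]
  refine ⟨⟨fun i => i, fun i => i.elim0, fun i => i.elim0⟩, ?_⟩
  rintro ⟨q, h1, h2⟩
  apply Subtype.ext
  funext i
  exact i.elim0

section app
variable {l : ℕ} (δ : Fin l → ℕ)

lemma card_sigma_eq : Fintype.card (Σ i : Fin l, Fin (δ i)) = ∑ i, δ i := by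
  simp

noncomputable def eqv : (Σ i : Fin l, Fin (δ i)) ≃ Fin (∑ i, δ i) :=
  Fintype.equivFinOfCardEq (card_sigma_eq δ)

noncomputable def gmap : Fin (∑ i, δ i) → Fin l := fun m => ((eqv δ).symm m).1

lemma prod_pow_eq (f : Fin l → ℝ) :
    ∏ m : Fin (∑ i, δ i), f (gmap δ m) = ∏ i, f i ^ δ i := by
  show ∏ m : Fin (∑ i, δ i), f (((eqv δ).symm m).1) = _
  have h1 : ∏ m : Fin (∑ i, δ i), f (((eqv δ).symm m).1)
      = ∏ σ : (Σ i : Fin l, Fin (δ i)), f σ.1 :=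
    Equiv.prod_comp (eqv δ).symm (fun σ => f σ.1)
  rw [h1, ← Finset.univ_sigma_univ, Finset.prod_sigma]
  simp

lemma gmap_apply (i : Fin l) (j : Fin (δ i)) : gmap δ (eqv δ ⟨i, j⟩) = i := by
  rw [gmap, Equiv.symm_apply_apply]

lemma gmap_eq_iff {m : Fin (∑ i, δ i)} {i : Fin l} :
    gmap δ m = i ↔ ∃ j : Fin (δ i), m = eqv δ ⟨i, j⟩ := by
  constructor
  · intro h
    subst h
    exact ⟨((eqv δ).symm m).2, ((eqv δ).apply_symm_apply m).symm⟩
  · rintro ⟨j, rfl⟩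
    exact gmap_apply δ i j

lemma gmap_unique {i : Fin l} (hδ : δ i = 1) {m m' : Fin (∑ i, δ i)}
    (hm : gmap δ m = i) (hm' : gmap δ m' = i) : m = m' := by
  obtain ⟨j, rfl⟩ := (gmap_eq_iff δ).mp hm
  obtain ⟨j', rfl⟩ := (gmap_eq_iff δ).mp hm'
  congr 1
  congr 1
  apply Fin.ext
  have h1 := j.isLt
  have h2 := j'.isLt
  omega

end app

lemma cross_if_mem {k : ℕ} {p : Fin k → Fin k} (hp : p ∈ invFinset k)
    {α : Type*} [DecidableEq α] {f : Fin k → α} {m : Fin k} (hm : f (p m) ≠ f m) :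
    (if m < p m then m else p m) ∈ (reps p).filter fun i => f i ≠ f (p i) := by
  rw [mem_invFinset] at hp
  by_cases hlt : m < p m
  · rw [if_pos hlt]
    exact Finset.mem_filter.mpr ⟨mem_reps.mpr hlt, hm.symm⟩
  · rw [if_neg hlt]
    have hgt : p m < m := lt_of_le_of_ne (not_lt.mp hlt) (hp.2 m)
    refine Finset.mem_filter.mpr ⟨mem_reps.mpr ?_, ?_⟩
    · rw [hp.1]; exact hgt
    · rw [hp.1]; exact hm

lemma abs_W_le {n k l : ℕ} {S : (Fin n × Fin n) → (Fin n × Fin n) → ℝ}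
    (hdecay : ∀ P1 P2 : Fin n × Fin n, ({P1.1, P1.2} : Finset (Fin n)) ≠ {P2.1, P2.2} →
      |S P1 P2| ≤ 1 / (n : ℝ))
    (hunit : ∀ pq : Fin n × Fin n, S pq pq = 1)
    {Q : Fin l → Fin n × Fin n} (hQ : FundDiff Q)
    (g : Fin k → Fin l) (p : Fin k → Fin k) :
    |∏ i ∈ reps p, S (Q (g i)) (Q (g (p i)))|
      ≤ ((n:ℝ)⁻¹) ^ ((reps p).filter fun i => g i ≠ g (p i)).card := by
  rw [Finset.abs_prod]
  have hb : ∀ i ∈ reps p, |S (Q (g i)) (Q (g (p i)))|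
      ≤ (if g i ≠ g (p i) then (n:ℝ)⁻¹ else 1) := by
    intro i _
    by_cases h : g i = g (p i)
    · rw [if_neg (by simpa using h), h, hunit (Q (g (p i)))]
      norm_num
    · rw [if_pos h]
      have := hdecay (Q (g i)) (Q (g (p i))) (hQ _ _ h)
      rwa [one_div] at this
  calc ∏ i ∈ reps p, |S (Q (g i)) (Q (g (p i)))|
      ≤ ∏ i ∈ reps p, (if g i ≠ g (p i) then (n:ℝ)⁻¹ else 1) :=
        Finset.prod_le_prod (fun i _ => abs_nonneg _) hb
    _ = ((n:ℝ)⁻¹) ^ ((reps p).filter fun i => g i ≠ g (p i)).card := by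
        rw [Finset.prod_ite, Finset.prod_const, Finset.prod_const, one_pow, mul_one]

@[reducible] def dtwo (l : ℕ) : Fin l → ℕ := fun _ => 2

def flipTwo : Fin 2 → Fin 2 := fun j => ⟨1 - j.val, by omega⟩

lemma flipTwo_val (j : Fin 2) : (flipTwo j).val = 1 - j.val := rfl

lemma flipTwo_flipTwo (j : Fin 2) : flipTwo (flipTwo j) = j := by
  apply Fin.ext
  rw [flipTwo_val, flipTwo_val]
  have := j.isLt
  omega

noncomputable def pzero (l : ℕ) : Fin (∑ i, dtwo l i) → Fin (∑ i, dtwo l i) :=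
  fun m => eqv (dtwo l) ⟨((eqv (dtwo l)).symm m).1, flipTwo (((eqv (dtwo l)).symm m).2)⟩

lemma pzero_symm (l : ℕ) (m : Fin (∑ i, dtwo l i)) :
    (eqv (dtwo l)).symm (pzero l m)
      = ⟨((eqv (dtwo l)).symm m).1, flipTwo (((eqv (dtwo l)).symm m).2)⟩ :=
  Equiv.symm_apply_apply _ _

lemma pzero_invol (l : ℕ) (m : Fin (∑ i, dtwo l i)) : pzero l (pzero l m) = m := by
  have h1 : pzero l (pzero l m)
      = eqv (dtwo l) ⟨((eqv (dtwo l)).symm (pzero l m)).1,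
          flipTwo (((eqv (dtwo l)).symm (pzero l m)).2)⟩ := rfl
  rw [h1, pzero_symm, flipTwo_flipTwo]
  exact (eqv (dtwo l)).apply_symm_apply m

lemma pzero_ne (l : ℕ) (m : Fin (∑ i, dtwo l i)) : pzero l m ≠ m := by
  intro h
  have h2 := congrArg (fun σ : (Σ i : Fin l, Fin (dtwo l i)) => σ.2.val)
    ((pzero_symm l m).symm.trans (congrArg (eqv (dtwo l)).symm h))
  simp only at h2
  rw [flipTwo_val] at h2
  have hb : (((eqv (dtwo l)).symm m).2).val < 2 := (((eqv (dtwo l)).symm m).2).isLt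
  omega

lemma gmap_pzero (l : ℕ) (m : Fin (∑ i, dtwo l i)) :
    gmap (dtwo l) (pzero l m) = gmap (dtwo l) m := by
  show ((eqv (dtwo l)).symm (pzero l m)).1 = _
  rw [pzero_symm]
  rfl

lemma pzero_mem (l : ℕ) : pzero l ∈ invFinset (∑ i, dtwo l i) :=
  mem_invFinset.mpr ⟨pzero_invol l, pzero_ne l⟩

lemma fiber_two {l : ℕ} {m x : Fin (∑ i, dtwo l i)}
    (hgx : gmap (dtwo l) x = gmap (dtwo l) m) (hne : x ≠ m) : x = pzero l m := by
  apply (eqv (dtwo l)).symm.injective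
  rw [pzero_symm]
  have h1 : ((eqv (dtwo l)).symm x).1 = ((eqv (dtwo l)).symm m).1 := hgx
  have hvne : (((eqv (dtwo l)).symm x).2 : Fin 2) ≠ (((eqv (dtwo l)).symm m).2 : Fin 2) := by
    intro h
    exact hne ((eqv (dtwo l)).symm.injective (Sigma.ext h1 (heq_of_eq h)))
  refine Sigma.ext h1 (heq_of_eq ?_)
  have hv : (((eqv (dtwo l)).symm x).2).val ≠ (((eqv (dtwo l)).symm m).2).val :=
    fun hc => hvne (Fin.ext hc)
  apply Fin.ext
  show (((eqv (dtwo l)).symm x).2).val = (flipTwo (((eqv (dtwo l)).symm m).2)).val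
  rw [flipTwo_val]
  have ha : (((eqv (dtwo l)).symm x).2).val < 2 := (((eqv (dtwo l)).symm x).2).isLt
  have hb : (((eqv (dtwo l)).symm m).2).val < 2 := (((eqv (dtwo l)).symm m).2).isLt
  omega

lemma exists_cross {l : ℕ} {p : Fin (∑ i, dtwo l i) → Fin (∑ i, dtwo l i)}
    (hp : p ∈ invFinset (∑ i, dtwo l i)) (hne : p ≠ pzero l) :
    ∃ m, gmap (dtwo l) (p m) ≠ gmap (dtwo l) m := by
  by_contra hcon
  push_neg at hcon
  apply hne
  funext m
  rw [mem_invFinset] at hp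
  exact fiber_two (hcon m) (hp.2 m)



end AUX

open AUX
/-- An approximately uncorrelated Gaussian ensemble is an approximately uncorrelated
triangular scheme, with constants `C(ℓ) = #PP(ℓ)` and sequences `C_n^{(ℓ)} = #PP(2ℓ)/n²`,
which are summable over `n`. -/
theorem stmt3 {Ω : Type*} [MeasurableSpace Ω] (P : Measure Ω) [IsProbabilityMeasure P]
    (a : (n : ℕ) → Ω → Matrix (Fin n) (Fin n) ℝ) (hG : IsAUGaussian P a) :
    IsApproxUncorr P a (fun l => (numPP l : ℝ)) (fun l n => (numPP (2 * l) : ℝ) / (n : ℝ) ^ 2) ∧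
    ∀ l : ℕ, Summable fun n : ℕ => (numPP (2 * l) : ℝ) / (n : ℝ) ^ 2 := by
  classical
  obtain ⟨hsym, hex⟩ := hG
  constructor
  · refine ⟨hsym, ?_, ?_, ?_, ?_⟩
    · intro n p q
      obtain ⟨S, -, -, -, -, hJG, -, -, -⟩ := hex n
      exact hJG.1 (p, q)
    · intro l
      exact Tendsto.div_atTop tendsto_const_nhds
        ((tendsto_pow_atTop (by norm_num : (2:ℕ) ≠ 0)).comp tendsto_natCast_atTop_atTop)
    · -- AU1
      intro n l Q hQ δ hδ
      rcases Nat.eq_zero_or_pos n with hn | hn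
      · subst hn
        have hl : l = 0 := by
          by_contra h
          exact (Q ⟨0, Nat.pos_of_ne_zero h⟩).1.elim0
        subst hl
        simp only [Finset.univ_eq_empty, Finset.prod_empty, Finset.sum_empty,
          Finset.filter_empty, Finset.card_empty, Nat.cast_zero, zero_div,
          Real.rpow_zero, div_one, integral_const, measure_univ, ENNReal.toReal_one, probReal_univ,
          one_smul, abs_one, numPP_zero, Nat.cast_one, le_refl]
      · obtain ⟨S, -, -, -, -, hJG, hSint, hdecay, hunit⟩ := hex n
        have hwick := wick P (fun pq ω => a n ω pq.1 pq.2) S hJG hSint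
          (g := fun m => Q (gmap δ m))
        have hint : ∫ ω, ∏ i, a n ω (Q i).1 (Q i).2 ^ δ i ∂P
            = ∑ p ∈ invFinset (∑ i, δ i),
                ∏ i ∈ reps p, S (Q (gmap δ i)) (Q (gmap δ (p i))) := by
          rw [← hwick]
          congr 1
          funext ω
          exact (prod_pow_eq δ (fun i => a n ω (Q i).1 (Q i).2)).symm
        rw [hint]
        set M := ((Finset.univ.filter fun i => δ i = 1)).card with hM
        have hple : ∀ p ∈ invFinset (∑ i, δ i),
            |∏ i ∈ reps p, S (Q (gmap δ i)) (Q (gmap δ (p i)))|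
              ≤ (n:ℝ) ^ (-((M:ℝ)/2)) := by
          intro p hp
          have h1 := abs_W_le hdecay hunit hQ (gmap δ) p
          have hm2 : M ≤ 2 * ((reps p).filter fun i => gmap δ i ≠ gmap δ (p i)).card := by
            set ψ : Fin l → Fin (∑ i, δ i) := fun i =>
              if eqv δ ⟨i, ⟨0, hδ i⟩⟩ < p (eqv δ ⟨i, ⟨0, hδ i⟩⟩)
              then eqv δ ⟨i, ⟨0, hδ i⟩⟩ else p (eqv δ ⟨i, ⟨0, hδ i⟩⟩) with hψdef
            have hinvol := mem_invFinset.mp hp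
            have hkey : ∀ i ∈ Finset.univ.filter (fun i => δ i = 1),
                ψ i ∈ (reps p).filter fun j => gmap δ j ≠ gmap δ (p j) := by
              intro i hi
              have hi1 : δ i = 1 := (Finset.mem_filter.mp hi).2
              have hg0 : gmap δ (eqv δ ⟨i, ⟨0, hδ i⟩⟩) = i := gmap_apply δ i _
              have hne : gmap δ (p (eqv δ ⟨i, ⟨0, hδ i⟩⟩))
                  ≠ gmap δ (eqv δ ⟨i, ⟨0, hδ i⟩⟩) := by
                intro hcon
                have := gmap_unique δ hi1 (hcon.trans hg0) hg0
                exact hinvol.2 _ this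
              rw [hψdef]
              exact cross_if_mem hp hne
            calc M = (Finset.univ.filter fun i => δ i = 1).card := hM
              _ ≤ 2 * ((Finset.univ.filter fun i => δ i = 1).image ψ).card := by
                  apply Finset.card_le_mul_card_image
                  intro r hr
                  refine le_trans (Finset.card_le_card (?_ :
                    ((Finset.univ.filter fun i => δ i = 1).filter fun i => ψ i = r)
                      ⊆ {gmap δ r, gmap δ (p r)})) ?_
                  · intro i hi
                    obtain ⟨hi1, hir⟩ := Finset.mem_filter.mp hi
                    have hg0 : gmap δ (eqv δ ⟨i, ⟨0, hδ i⟩⟩) = i := gmap_apply δ i _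
                    rw [hψdef] at hir
                    simp only at hir
                    by_cases hlt : eqv δ ⟨i, ⟨0, hδ i⟩⟩ < p (eqv δ ⟨i, ⟨0, hδ i⟩⟩)
                    · rw [if_pos hlt] at hir
                      subst hir
                      simp [hg0]
                    · rw [if_neg hlt] at hir
                      subst hir
                      rw [Finset.mem_insert, Finset.mem_singleton]
                      right
                      rw [hinvol.1, hg0]
                  · exact (Finset.card_insert_le _ _).trans (by simp)
              _ ≤ 2 * ((reps p).filter fun j => gmap δ j ≠ gmap δ (p j)).card := by
                  apply Nat.mul_le_mul_left
                  apply Finset.card_le_card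
                  intro r hr
                  obtain ⟨i, hi, rfl⟩ := Finset.mem_image.mp hr
                  exact hkey i hi
          refine h1.trans ?_
          have hc1 : ((n:ℝ)⁻¹) ^ ((reps p).filter fun i => gmap δ i ≠ gmap δ (p i)).card
              = (n:ℝ) ^ (-((((reps p).filter fun i =>
                  gmap δ i ≠ gmap δ (p i)).card : ℕ) : ℝ)) := by
            rw [Real.rpow_neg (Nat.cast_nonneg n), Real.rpow_natCast, inv_pow]
          rw [hc1]
          apply Real.rpow_le_rpow_of_exponent_le (by exact_mod_cast hn)
          have h2 : (M:ℝ) ≤ 2 * ((((reps p).filter fun i =>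
              gmap δ i ≠ gmap δ (p i)).card : ℕ) : ℝ) := by exact_mod_cast hm2
          linarith
        calc |∑ p ∈ invFinset (∑ i, δ i),
              ∏ i ∈ reps p, S (Q (gmap δ i)) (Q (gmap δ (p i)))|
            ≤ ∑ p ∈ invFinset (∑ i, δ i),
              |∏ i ∈ reps p, S (Q (gmap δ i)) (Q (gmap δ (p i)))| :=
              Finset.abs_sum_le_sum_abs _ _
          _ ≤ ∑ _p ∈ invFinset (∑ i, δ i), (n:ℝ) ^ (-((M:ℝ)/2)) :=
              Finset.sum_le_sum hple
          _ = ((invFinset (∑ i, δ i)).card : ℝ) * (n:ℝ) ^ (-((M:ℝ)/2)) := by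
              rw [Finset.sum_const, nsmul_eq_mul]
          _ = (numPP (∑ i, δ i) : ℝ) / (n:ℝ) ^ ((M:ℝ)/2) := by
              rw [numPP_eq, Real.rpow_neg (Nat.cast_nonneg n)]
              exact (div_eq_mul_inv _ _).symm
    · -- AU2
      intro n l Q hQ
      rcases Nat.eq_zero_or_pos n with hn | hn
      · subst hn
        have hl : l = 0 := by
          by_contra h
          exact (Q ⟨0, Nat.pos_of_ne_zero h⟩).1.elim0
        subst hl
        simp only [Finset.univ_eq_empty, Finset.prod_empty, integral_const, measure_univ,
          ENNReal.toReal_one, probReal_univ, one_smul, sub_self, abs_zero, Nat.cast_zero]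
        norm_num
      · obtain ⟨S, -, -, -, -, hJG, hSint, hdecay, hunit⟩ := hex n
        have hsum2 : (∑ i : Fin l, dtwo l i) = 2 * l := by
          simp [dtwo, mul_comm]
        have hwick := wick P (fun pq ω => a n ω pq.1 pq.2) S hJG hSint
          (g := fun m => Q (gmap (dtwo l) m))
        have hint : ∫ ω, ∏ i, a n ω (Q i).1 (Q i).2 ^ 2 ∂P
            = ∑ p ∈ invFinset (∑ i, dtwo l i),
                ∏ i ∈ reps p, S (Q (gmap (dtwo l) i)) (Q (gmap (dtwo l) (p i))) := by
          rw [← hwick]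
          congr 1
          funext ω
          exact (prod_pow_eq (dtwo l) (fun i => a n ω (Q i).1 (Q i).2)).symm
        rw [hint, ← Finset.add_sum_erase _ _ (pzero_mem l)]
        have hW0 : ∏ i ∈ reps (pzero l),
            S (Q (gmap (dtwo l) i)) (Q (gmap (dtwo l) (pzero l i))) = 1 := by
          apply Finset.prod_eq_one
          intro i _
          rw [gmap_pzero]
          exact hunit _
        rw [hW0, add_sub_cancel_left]
        have hbound : ∀ p ∈ (invFinset (∑ i, dtwo l i)).erase (pzero l),
            |∏ i ∈ reps p, S (Q (gmap (dtwo l) i)) (Q (gmap (dtwo l) (p i)))|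
              ≤ ((n:ℝ)⁻¹) ^ 2 := by
          intro p hp'
          obtain ⟨hpne, hp⟩ := Finset.mem_erase.mp hp'
          have h1 := abs_W_le hdecay hunit hQ (gmap (dtwo l)) p
          have hinvol := mem_invFinset.mp hp
          obtain ⟨m, hm⟩ := exists_cross hp hpne
          have hm' : gmap (dtwo l) (p (pzero l m)) ≠ gmap (dtwo l) (pzero l m) := by
            intro hcon
            rw [gmap_pzero] at hcon
            by_cases hc2 : p (pzero l m) = m
            · have hpm : p m = pzero l m := by
                have := congrArg p hc2
                rw [hinvol.1] at this
                exact this.symm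
              rw [hpm, gmap_pzero] at hm
              exact hm rfl
            · exact hinvol.2 _ (fiber_two hcon hc2)
          have hr1mem : (if m < p m then m else p m)
              ∈ (reps p).filter fun i => gmap (dtwo l) i ≠ gmap (dtwo l) (p i) :=
            cross_if_mem hp hm
          have hr2mem : (if pzero l m < p (pzero l m) then pzero l m else p (pzero l m))
              ∈ (reps p).filter fun i => gmap (dtwo l) i ≠ gmap (dtwo l) (p i) :=
            cross_if_mem hp hm'
          have hmm' : m ≠ pzero l m := (pzero_ne l m).symm
          have hpmm' : p m ≠ pzero l m := by
            intro h
            exact hm (by rw [h, gmap_pzero])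
          have hmppm' : m ≠ p (pzero l m) := by
            intro h
            have h2 : p m = p (p (pzero l m)) := congrArg p h
            rw [hinvol.1] at h2
            exact hpmm' h2
          have hpm12 : p m ≠ p (pzero l m) := by
            intro h
            have := congrArg p h
            rw [hinvol.1, hinvol.1] at this
            exact hmm' this
          have hr12 : (if m < p m then m else p m)
              ≠ (if pzero l m < p (pzero l m) then pzero l m else p (pzero l m)) := by
            by_cases c1 : m < p m <;> by_cases c2 : pzero l m < p (pzero l m) <;>
              simp [c1, c2, hmm', hpmm', hmppm', hpm12]
          have hcc : 2 ≤ ((reps p).filter fun i =>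
              gmap (dtwo l) i ≠ gmap (dtwo l) (p i)).card := by
            have hsub : ({(if m < p m then m else p m),
                (if pzero l m < p (pzero l m) then pzero l m else p (pzero l m))} :
                  Finset (Fin (∑ i, dtwo l i)))
                ⊆ (reps p).filter fun i => gmap (dtwo l) i ≠ gmap (dtwo l) (p i) := by
              intro x hx
              rcases Finset.mem_insert.mp hx with rfl | hx
              · exact hr1mem
              · rw [Finset.mem_singleton.mp hx]
                exact hr2mem
            calc 2 = ({(if m < p m then m else p m),
                (if pzero l m < p (pzero l m) then pzero l m else p (pzero l m))} :
                  Finset (Fin (∑ i, dtwo l i))).card := (Finset.card_pair hr12).symm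
              _ ≤ _ := Finset.card_le_card hsub
          refine h1.trans ?_
          exact pow_le_pow_of_le_one (by positivity)
            (inv_le_one_of_one_le₀ (by exact_mod_cast hn)) hcc
        calc |∑ p ∈ (invFinset (∑ i, dtwo l i)).erase (pzero l),
              ∏ i ∈ reps p, S (Q (gmap (dtwo l) i)) (Q (gmap (dtwo l) (p i)))|
            ≤ ∑ p ∈ (invFinset (∑ i, dtwo l i)).erase (pzero l),
              |∏ i ∈ reps p, S (Q (gmap (dtwo l) i)) (Q (gmap (dtwo l) (p i)))| :=
              Finset.abs_sum_le_sum_abs _ _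
          _ ≤ ∑ _p ∈ (invFinset (∑ i, dtwo l i)).erase (pzero l), ((n:ℝ)⁻¹) ^ 2 :=
              Finset.sum_le_sum hbound
          _ = (((invFinset (∑ i, dtwo l i)).erase (pzero l)).card : ℝ) * ((n:ℝ)⁻¹) ^ 2 := by
              rw [Finset.sum_const, nsmul_eq_mul]
          _ ≤ (numPP (2 * l) : ℝ) / (n:ℝ) ^ 2 := by
              rw [← hsum2, numPP_eq, inv_pow, div_eq_mul_inv]
              apply mul_le_mul_of_nonneg_right
              · exact_mod_cast Finset.card_le_card (Finset.erase_subset _ _)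
              · positivity
  · intro l
    have h : Summable (fun n : ℕ => 1 / (n:ℝ)^2) :=
      Real.summable_one_div_nat_pow.mpr one_lt_two
    apply Summable.congr (h.mul_left (numPP (2*l) : ℝ))
    intro n
    rw [mul_one_div]
end

section
/- Let k,n∈ℕ and π∈Π(k) with π_i ≠ 0 for some odd i∈[k]. Let s ≥ 2 and let ℓ̲ = (ℓ_2,…,ℓ_s) ∈ {0,1,…,π_1+…+π_k}^{s−1} with ℓ̲ ≠ (0,…,0). Then #T_n^{(ℓ̲)}(π) ≤ k^k·n·b_n^{π_1+…+π_k−1} · ∏_{i∈{2,…,s}: ℓ_i=0} k^k·n·b_n^{π_1+…+π_k−1} · ∏_{i∈{2,…,s}: ℓ_i≥1} (2k)^k·k·(ks)^{ℓ_i}·b_n^{π_1+…+π_k−ℓ_i}. -/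
open Finset

/-- Cyclic successor in `Fin k`. -/
def cyc {k : ℕ} (j : Fin k) : Fin k := j + ⟨1 % k, Nat.mod_lt 1 j.pos⟩

/-- The endpoint set of the `j`-th edge of the tuple `t` (indices cyclic mod `k`). -/
def cedge {n k : ℕ} (t : Fin k → Fin n) (j : Fin k) : Finset (Fin n) := {t j, t (cyc j)}

/-- The multiplicity of the endpoint set `e` among the edges of `t`. -/
def edgeMult {n k : ℕ} (t : Fin k → Fin n) (e : Finset (Fin n)) : ℕ :=
  (Finset.univ.filter fun j => cedge t j = e).card

/-- `profileCount t l` is the number of distinct edge endpoint sets of multiplicity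
exactly `l` in `t`. -/
def profileCount {n k : ℕ} (t : Fin k → Fin n) (l : ℕ) : ℕ :=
  ((Finset.univ.image (cedge t)).filter fun e => edgeMult t e = l).card

/-- `π` is a possible profile of a `k`-tuple. -/
def IsProfile (k : ℕ) (π : ℕ → ℕ) : Prop :=
  ∃ (n : ℕ) (t : Fin k → Fin n), ∀ l : ℕ, π l = profileCount t l

/-- The tuple `t` is `b`-relevant. -/
def TupRel (n b : ℕ) {k : ℕ} (t : Fin k → Fin n) : Prop :=
  ∀ j : Fin k, BRelevant n b (t j) (t (cyc j))

/-- The set `𝒯_n(π)` of `b`-relevant `k`-tuples in `[n]^k` with profile `π`. -/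
def Tprof (n b k : ℕ) (π : ℕ → ℕ) : Set (Fin k → Fin n) :=
  {t | TupRel n b t ∧ ∀ l : ℕ, profileCount t l = π l}

/-- The set of distinct edge endpoint sets of `t`. -/
def edgeFinset {n k : ℕ} (t : Fin k → Fin n) : Finset (Finset (Fin n)) :=
  Finset.univ.image (cedge t)

/-- `𝒯_n^d(π)`: pairs of tuples in `𝒯_n(π)` with disjoint edge sets. -/
def TprofD (n b k : ℕ) (π : ℕ → ℕ) : Set ((Fin k → Fin n) × (Fin k → Fin n)) :=
  {st | st.1 ∈ Tprof n b k π ∧ st.2 ∈ Tprof n b k π ∧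
    edgeFinset st.1 ∩ edgeFinset st.2 = ∅}

/-- `𝒯_n^c(π)`: pairs of tuples in `𝒯_n(π)` sharing at least one edge. -/
def TprofC (n b k : ℕ) (π : ℕ → ℕ) : Set ((Fin k → Fin n) × (Fin k → Fin n)) :=
  {st | st.1 ∈ Tprof n b k π ∧ st.2 ∈ Tprof n b k π ∧
    edgeFinset st.1 ∩ edgeFinset st.2 ≠ ∅}

/-- `𝒯_n^{c,ℓ}(π)`: pairs of tuples in `𝒯_n(π)` sharing exactly `ℓ` edges. -/
def TprofCl (n b k : ℕ) (π : ℕ → ℕ) (l : ℕ) : Set ((Fin k → Fin n) × (Fin k → Fin n)) :=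
  {st | st.1 ∈ Tprof n b k π ∧ st.2 ∈ Tprof n b k π ∧
    (edgeFinset st.1 ∩ edgeFinset st.2).card = l}

/-- `𝒯_n^{(ℓ̲)}(π)`: `s`-tuples of tuples in `𝒯_n(π)` such that, for each `i ∈ {2,…,s}`,
the `i`-th tuple has exactly `L i` of its distinct edge endpoint sets in common with the
union of the edge endpoint sets of the previous tuples. -/
def TprofOv (n b k s : ℕ) (π : ℕ → ℕ) (L : Fin s → ℕ) : Set (Fin s → (Fin k → Fin n)) :=
  {T | (∀ i : Fin s, T i ∈ Tprof n b k π) ∧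
    ∀ i : Fin s, 0 < (i : ℕ) →
      (edgeFinset (T i) ∩
        (Finset.univ.filter fun j : Fin s => j < i).biUnion fun j => edgeFinset (T j)).card
        = L i}


section AuxBasic

variable {n k : ℕ}

theorem cyc_val (j : Fin k) : (cyc j : ℕ) = ((j : ℕ) + 1) % k := by
  show ((j : ℕ) + 1 % k) % k = ((j : ℕ) + 1) % k
  conv_rhs => rw [Nat.add_mod]
  rw [Nat.add_mod, Nat.mod_mod_of_dvd _ dvd_rfl]

theorem cyc_succ {m : ℕ} (h : m + 1 < k) : cyc (⟨m, by omega⟩ : Fin k) = ⟨m + 1, h⟩ := by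
  apply Fin.ext
  rw [cyc_val]
  simp [Nat.mod_eq_of_lt h]

theorem cyc_le {j j' : Fin k} (h : j' < j) : cyc j' ≤ j := by
  have h2 : (j' : ℕ) + 1 < k := by
    have := j.isLt; have := Fin.lt_def.mp h; omega
  have hv : (cyc j' : ℕ) = (j' : ℕ) + 1 := by rw [cyc_val, Nat.mod_eq_of_lt h2]
  rw [Fin.le_def, hv]
  have := Fin.lt_def.mp h; omega

theorem mem_pair_iff {α : Type*} [DecidableEq α] {x a c : α} :
    x ∈ ({a, c} : Finset α) ↔ x = a ∨ x = c := by simp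

theorem pair_right {α : Type*} [DecidableEq α] {a c a' c' : α}
    (h : ({a, c} : Finset α) = {a', c'}) (ha : a = a') : c = c' := by
  subst ha
  have hc' : c' ∈ ({a, c} : Finset α) := by rw [h]; simp
  have hc : c ∈ ({a, c'} : Finset α) := by rw [← h]; simp
  rcases mem_pair_iff.mp hc' with h1 | h1
  · rcases mem_pair_iff.mp hc with h2 | h2
    · exact h2.trans h1.symm
    · exact h2
  · exact h1.symm

theorem pair_cases {α : Type*} [DecidableEq α] {a c a' c' : α} (hne : a' ≠ c')
    (h : ({a, c} : Finset α) = {a', c'}) : (a = a' ∧ c = c') ∨ (a = c' ∧ c = a') := by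
  have ha : a ∈ ({a', c'} : Finset α) := by rw [← h]; simp
  rcases mem_pair_iff.mp ha with h1 | h1
  · exact Or.inl ⟨h1, pair_right h h1⟩
  · refine Or.inr ⟨h1, ?_⟩
    have : ({a, c} : Finset α) = {c', a'} := by rw [h, Finset.pair_comm]
    exact pair_right this h1

theorem mem_cedge_left (t : Fin k → Fin n) (j : Fin k) : t j ∈ cedge t j := by
  simp [cedge]

theorem mem_cedge_right (t : Fin k → Fin n) (j : Fin k) : t (cyc j) ∈ cedge t j := by
  simp [cedge]

/-- first index whose value equals the arrival vertex of step `j`. -/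
def fmin (t : Fin k → Fin n) (j : Fin k) : Fin k :=
  (Finset.univ.filter fun j' => t j' = t (cyc j)).min'
    ⟨cyc j, by simp⟩

theorem fmin_spec (t : Fin k → Fin n) (j : Fin k) : t (fmin t j) = t (cyc j) := by
  have := Finset.min'_mem (Finset.univ.filter fun j' => t j' = t (cyc j))
    ⟨cyc j, by simp⟩
  simpa [fmin] using (Finset.mem_filter.mp this).2

theorem fmin_le (t : Fin k → Fin n) {j j' : Fin k} (h : t j' = t (cyc j)) :
    fmin t j ≤ j' :=
  Finset.min'_le _ _ (by simp [h])

theorem new_arrival {t : Fin k → Fin n} {j : Fin k} (h : j < fmin t j) :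
    ∀ j' : Fin k, j' ≤ j → t j' ≠ t (cyc j) := by
  intro j' hj' heq
  exact absurd (le_trans (fmin_le t heq) hj') (not_le.mpr h)

/-- `j` is the first occurrence of its edge. -/
def isFirstOcc (t : Fin k → Fin n) (j : Fin k) : Prop :=
  ∀ j' < j, cedge t j' ≠ cedge t j

instance (t : Fin k → Fin n) (j : Fin k) : Decidable (isFirstOcc t j) := by
  unfold isFirstOcc; infer_instance

theorem new_arrival_firstOcc {t : Fin k → Fin n} {j : Fin k} (h : j < fmin t j) :
    isFirstOcc t j := by
  intro j' hj' heq
  have harr : t (cyc j) ∈ cedge t j' := heq ▸ mem_cedge_right t j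
  rcases mem_pair_iff.mp harr with h1 | h1
  · exact new_arrival h j' (le_of_lt hj') h1.symm
  · exact new_arrival h (cyc j') (cyc_le hj') h1.symm

/-- rank of `j` in the finset `J`. -/
def rank (J : Finset (Fin k)) (j : Fin k) : ℕ := (J.filter fun x => x < j).card

theorem rank_lt_of_lt {J : Finset (Fin k)} {j j' : Fin k} (hj : j ∈ J) (h : j < j') :
    rank J j < rank J j' := by
  apply Finset.card_lt_card
  constructor
  · intro x hx
    simp only [Finset.mem_filter] at hx ⊢
    exact ⟨hx.1, lt_trans hx.2 h⟩
  · intro hsub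
    have : j ∈ J.filter fun x => x < j' := Finset.mem_filter.mpr ⟨hj, h⟩
    have := hsub this
    simp at this

theorem rank_injOn {J : Finset (Fin k)} {j j' : Fin k} (hj : j ∈ J) (hj' : j' ∈ J)
    (h : rank J j = rank J j') : j = j' := by
  rcases lt_trichotomy j j' with hlt | heq | hlt
  · exact absurd h (ne_of_lt (rank_lt_of_lt hj hlt))
  · exact heq
  · exact absurd h.symm (ne_of_lt (rank_lt_of_lt hj' hlt))

theorem rank_lt_card {J : Finset (Fin k)} {j : Fin k} (hj : j ∈ J) :
    rank J j < J.card := by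
  apply Finset.card_lt_card
  constructor
  · exact Finset.filter_subset _ _
  · intro hsub
    have := hsub hj
    simp at this

/-- generic ranked indexing. -/
noncomputable def indexWith {X : Type*} (J : Finset (Fin k)) (δ : Fin k → X) (junk : X)
    (q : ℕ) : X :=
  if h : ∃ j, j ∈ J ∧ rank J j = q then δ (Classical.choose h) else junk

theorem indexWith_spec {X : Type*} {J : Finset (Fin k)} (δ : Fin k → X) (junk : X)
    {j : Fin k} (hj : j ∈ J) : indexWith J δ junk (rank J j) = δ j := by
  have h : ∃ j', j' ∈ J ∧ rank J j' = rank J j := ⟨j, hj, rfl⟩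
  rw [indexWith, dif_pos h]
  congr 1
  exact rank_injOn (Classical.choose_spec h).1 hj (Classical.choose_spec h).2

end AuxBasic

section AuxD

variable {n k b : ℕ}

/-- the set of admissible step differences in `ZMod n`. -/
noncomputable def dset (n b : ℕ) : Finset (ZMod n) :=
  if b = n then (Finset.Icc (0 : ℤ) ((n : ℤ) - 1)).image (Int.cast : ℤ → ZMod n)
  else (Finset.Icc (-(((b - 1) / 2 : ℕ) : ℤ)) (((b - 1) / 2 : ℕ) : ℤ)).image
    (Int.cast : ℤ → ZMod n)

theorem dset_nonempty (hn : 1 ≤ n) : (dset n b).Nonempty := by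
  unfold dset
  split_ifs
  · exact ⟨((0 : ℤ) : ZMod n),
      Finset.mem_image.mpr ⟨0, by simp only [Finset.mem_Icc]; omega, rfl⟩⟩
  · exact ⟨((0 : ℤ) : ZMod n),
      Finset.mem_image.mpr ⟨0, by simp only [Finset.mem_Icc]; omega, rfl⟩⟩

theorem card_dset (hn : 1 ≤ n) (hb : IsBandwidth n b) : (dset n b).card ≤ b := by
  unfold dset
  split_ifs with h
  · calc _ ≤ (Finset.Icc (0 : ℤ) ((n : ℤ) - 1)).card := Finset.card_image_le
      _ = n := by rw [Int.card_Icc]; omega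
      _ = b := h.symm
  · rcases hb with h' | ⟨hb1, hb2, hb3⟩
    · exact absurd h' h
    · calc _ ≤ (Finset.Icc (-(((b - 1) / 2 : ℕ) : ℤ)) (((b - 1) / 2 : ℕ) : ℤ)).card :=
          Finset.card_image_le
        _ ≤ b := by
          rw [Int.card_Icc]
          have := Nat.odd_iff.mp hb3
          omega

/-- the step difference of step `j`. -/
def diff (t : Fin k → Fin n) (j : Fin k) : ZMod n :=
  ((t (cyc j) : ℕ) : ZMod n) - ((t j : ℕ) : ZMod n)

theorem diff_eq_intCast (t : Fin k → Fin n) (j : Fin k) :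
    (((((t (cyc j)) : ℕ) : ℤ) - ((t j : ℕ) : ℤ) : ℤ) : ZMod n) = diff t j := by
  push_cast [diff]; ring

theorem finCast_inj (hn : 1 ≤ n) {x y : Fin n}
    (h : ((x : ℕ) : ZMod n) = ((y : ℕ) : ZMod n)) : x = y := by
  haveI : NeZero n := ⟨by omega⟩
  have hx := ZMod.val_natCast_of_lt x.isLt
  have hy := ZMod.val_natCast_of_lt y.isLt
  apply Fin.ext
  rw [← hx, ← hy, h]

theorem diff_decode (hn : 1 ≤ n) {t u : Fin k → Fin n} {j j' : Fin k}
    (hd : diff t j = diff u j') (hs : t j = u j') : t (cyc j) = u (cyc j') := by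
  apply finCast_inj hn
  have h1 : ((t (cyc j) : ℕ) : ZMod n) = diff t j + ((t j : ℕ) : ZMod n) := by
    rw [diff]; ring
  have h2 : ((u (cyc j') : ℕ) : ZMod n) = diff u j' + ((u j' : ℕ) : ZMod n) := by
    rw [diff]; ring
  rw [h1, h2, hd, hs]

theorem diff_mem_dset (hn : 1 ≤ n) (hb : IsBandwidth n b) {t : Fin k → Fin n}
    (ht : TupRel n b t) (j : Fin k) : diff t j ∈ dset n b := by
  haveI : NeZero n := ⟨by omega⟩
  unfold dset
  split_ifs with h
  · refine Finset.mem_image.mpr ⟨((diff t j).val : ℤ), ?_, ?_⟩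
    · have := (diff t j).val_lt
      simp only [Finset.mem_Icc]
      omega
    · push_cast
      rw [ZMod.natCast_val, ZMod.cast_id]
  · rcases hb with h' | ⟨hb1, hb2, hb3⟩
    · exact absurd h' h
    · rcases ht j with h' | hrel | hrel
      · exact absurd h' h
      · set w : ℤ := ((t (cyc j) : ℕ) : ℤ) - ((t j : ℕ) : ℤ) with hw
        refine Finset.mem_image.mpr ⟨w, ?_, ?_⟩
        · simp only [Finset.mem_Icc]
          have : ((t j : ℤ) - ((t (cyc j)) : ℤ)).natAbs ≤ (b - 1) / 2 := hrel
          omega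
        · rw [hw]; exact diff_eq_intCast t j
      · set w : ℤ := ((t (cyc j) : ℕ) : ℤ) - ((t j : ℕ) : ℤ) with hw
        have hlt1 : ((t j : ℕ) : ℤ) < n := by exact_mod_cast (t j).isLt
        have hlt2 : ((t (cyc j) : ℕ) : ℤ) < n := by exact_mod_cast (t (cyc j)).isLt
        have hge1 : (0 : ℤ) ≤ ((t j : ℕ) : ℤ) := by positivity
        have hge2 : (0 : ℤ) ≤ ((t (cyc j) : ℕ) : ℤ) := by positivity
        have hrel' : (n : ℤ) - ((b - 1) / 2 : ℕ) ≤ w.natAbs := by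
          have h1 : (n : ℕ) - (b - 1) / 2 ≤ ((t j : ℤ) - ((t (cyc j)) : ℤ)).natAbs := hrel
          have hbn : ((b : ℕ) - 1) / 2 < n := by omega
          omega
        by_cases hsg : 0 ≤ w
        · refine Finset.mem_image.mpr ⟨w - n, ?_, ?_⟩
          · simp only [Finset.mem_Icc]; omega
          · rw [Int.cast_sub, Int.cast_natCast, ZMod.natCast_self, sub_zero, hw,
              diff_eq_intCast]
        · refine Finset.mem_image.mpr ⟨w + n, ?_, ?_⟩
          · simp only [Finset.mem_Icc]; omega
          · rw [Int.cast_add, Int.cast_natCast, ZMod.natCast_self, add_zero, hw,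
              diff_eq_intCast]

/-- rotation of a tuple. -/
def rot (r : Fin k) (t : Fin k → Fin n) : Fin k → Fin n := fun j => t (j + r)

theorem cyc_add [NeZero k] (j r : Fin k) : cyc j + r = cyc (j + r) := by
  unfold cyc
  rw [add_right_comm]

theorem cedge_rot [NeZero k] (r : Fin k) (t : Fin k → Fin n) (j : Fin k) :
    cedge (rot r t) j = cedge t (j + r) := by
  unfold cedge rot
  rw [cyc_add]

theorem rot_injective [NeZero k] (r : Fin k) {t u : Fin k → Fin n}
    (h : rot r t = rot r u) : t = u := by
  funext j
  have := congrFun h (j - r)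
  simpa [rot, sub_add_cancel] using this

theorem edgeFinset_rot [NeZero k] (r : Fin k) (t : Fin k → Fin n) :
    edgeFinset (rot r t) = edgeFinset t := by
  unfold edgeFinset
  apply Finset.Subset.antisymm
  · intro e he
    obtain ⟨j, _, hj⟩ := Finset.mem_image.mp he
    exact Finset.mem_image.mpr ⟨j + r, Finset.mem_univ _, by rw [← cedge_rot]; exact hj⟩
  · intro e he
    obtain ⟨j, _, hj⟩ := Finset.mem_image.mp he
    refine Finset.mem_image.mpr ⟨j - r, Finset.mem_univ _, ?_⟩
    rw [cedge_rot, sub_add_cancel]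
    exact hj

theorem tupRel_rot [NeZero k] (r : Fin k) {t : Fin k → Fin n} (ht : TupRel n b t) :
    TupRel n b (rot r t) := by
  intro j
  have h2 : rot r t (cyc j) = t (cyc (j + r)) := by
    unfold rot
    rw [cyc_add]
  rw [h2]
  exact ht (j + r)

end AuxD

section AuxGraph

variable {α : Type*} [DecidableEq α]

/-- chains of length `m` from `a`. -/
def reachN (step : α → α → Prop) (a : α) : ℕ → α → Prop
  | 0, v => v = a
  | (m + 1), v => ∃ u, reachN step a m u ∧ step u v

theorem reach_exists {step : α → α → Prop} {a v : α}
    (h : Relation.ReflTransGen step a v) : ∃ m, reachN step a m v := by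
  induction h with
  | refl => exact ⟨0, rfl⟩
  | tail _ hstep ih =>
    obtain ⟨m, hm⟩ := ih
    exact ⟨m + 1, _, hm, hstep⟩

theorem conn_card (F : Finset (Finset α)) (a : α) (S : Finset α)
    (hS : ∀ v ∈ S, Relation.ReflTransGen
      (fun x y => ({x, y} : Finset α) ∈ F ∧ x ≠ y) a v) :
    (S.erase a).card ≤ F.card := by
  classical
  set step : α → α → Prop := fun x y => ({x, y} : Finset α) ∈ F ∧ x ≠ y with hstep
  set dfun : α → ℕ := fun v =>
    if h : ∃ m, reachN step a m v then Nat.find h else 0 with hdfun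
  have hd1 : ∀ v (h : ∃ m, reachN step a m v), reachN step a (dfun v) v := by
    intro v h
    rw [hdfun]
    simp only [dif_pos h]
    exact Nat.find_spec h
  have hd2 : ∀ v m, reachN step a m v → dfun v ≤ m := by
    intro v m hm
    have hh : ∃ m', reachN step a m' v := ⟨m, hm⟩
    rw [hdfun]
    simp only [dif_pos hh]
    exact Nat.find_le hm
  have hdpos : ∀ v ∈ S.erase a, 1 ≤ dfun v := by
    intro v hv
    obtain ⟨hva, hvS⟩ := Finset.mem_erase.mp hv
    have hex : ∃ m, reachN step a m v := reach_exists (hS v hvS)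
    have hr := hd1 v hex
    by_contra hc
    push_neg at hc
    have h0 : dfun v = 0 := by omega
    rw [h0] at hr
    exact hva hr
  have hkey : ∀ v ∈ S.erase a, ∃ u, reachN step a (dfun v - 1) u ∧ step u v := by
    intro v hv
    obtain ⟨hva, hvS⟩ := Finset.mem_erase.mp hv
    have hex : ∃ m, reachN step a m v := reach_exists (hS v hvS)
    have hr := hd1 v hex
    have : dfun v = (dfun v - 1) + 1 := by
      have := hdpos v hv
      omega
    rw [this] at hr
    exact hr
  choose g hg1 hg2 using hkey
  have hgd : ∀ v (hv : v ∈ S.erase a), dfun (g v hv) < dfun v := by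
    intro v hv
    have h1 := hd2 _ _ (hg1 v hv)
    have h2 := hdpos v hv
    omega
  apply Finset.card_le_card_of_injOn
    (fun v => if h : v ∈ S.erase a then ({g v h, v} : Finset α) else ∅)
  · intro v hv
    have hv' : v ∈ S.erase a := Finset.mem_coe.mp hv
    beta_reduce
    rw [dif_pos hv']
    exact (hg2 v hv').1
  · intro v hv w hw heq
    simp only [Finset.mem_coe] at hv hw
    simp only at heq
    rw [dif_pos hv, dif_pos hw] at heq
    have hvmem : v ∈ ({g w hw, w} : Finset α) := by rw [← heq]; simp
    rcases mem_pair_iff.mp hvmem with h1 | h1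
    · have hwmem : w ∈ ({g v hv, v} : Finset α) := by rw [heq]; simp
      rcases mem_pair_iff.mp hwmem with h2 | h2
      · exfalso
        have d1 := hgd v hv
        have d2 := hgd w hw
        rw [← h1] at d2
        rw [← h2] at d1
        omega
      · exact h2.symm
    · exact h1

end AuxGraph

section AuxVB

variable {n k : ℕ}

theorem walk_reach (hk : 0 < k) (t : Fin k → Fin n) (F : Finset (Finset (Fin n)))
    (hF : ∀ j : Fin k, t j ≠ t (cyc j) →
      Relation.ReflTransGen (fun x y => ({x, y} : Finset (Fin n)) ∈ F ∧ x ≠ y)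
        (t j) (t (cyc j))) :
    ∀ v ∈ Finset.univ.image t,
      Relation.ReflTransGen (fun x y => ({x, y} : Finset (Fin n)) ∈ F ∧ x ≠ y)
        (t ⟨0, hk⟩) v := by
  have key : ∀ m : ℕ, ∀ hm : m < k,
      Relation.ReflTransGen (fun x y => ({x, y} : Finset (Fin n)) ∈ F ∧ x ≠ y)
        (t ⟨0, hk⟩) (t ⟨m, hm⟩) := by
    intro m
    induction m with
    | zero => intro hm; exact Relation.ReflTransGen.refl
    | succ p ih =>
      intro hm
      have hp : p < k := by omega
      have hprev := ih hp
      have hcyc : cyc (⟨p, hp⟩ : Fin k) = ⟨p + 1, hm⟩ := cyc_succ hm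
      by_cases hne : t ⟨p, hp⟩ = t (cyc ⟨p, hp⟩)
      · rw [hcyc] at hne
        rw [← hne]
        exact hprev
      · have := hF ⟨p, hp⟩ hne
        rw [hcyc] at this
        exact hprev.trans this
  intro v hv
  obtain ⟨j, _, hj⟩ := Finset.mem_image.mp hv
  have := key (j : ℕ) j.isLt
  simpa [Fin.eta, hj] using this

theorem vertex_bound (hk : 0 < k) (hn : 1 ≤ n) {t : Fin k → Fin n}
    {e : Finset (Fin n)} (he : e ∈ edgeFinset t) (hodd : Odd (edgeMult t e)) :
    (Finset.univ.image t).card ≤ (edgeFinset t).card := by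
  classical
  haveI : NeZero k := ⟨by omega⟩
  obtain ⟨j₀, _, hj₀⟩ := Finset.mem_image.mp he
  set a := t j₀ with ha
  set c := t (cyc j₀) with hc
  have hee : e = ({a, c} : Finset (Fin n)) := by rw [← hj₀]; rfl
  set F := (edgeFinset t).erase e with hF
  set step : Fin n → Fin n → Prop :=
    fun x y => ({x, y} : Finset (Fin n)) ∈ F ∧ x ≠ y with hstepdef
  set R := Relation.ReflTransGen step with hR
  have hsymm : Symmetric step := by
    intro x y ⟨hm, hne⟩
    exact ⟨by rwa [Finset.pair_comm], hne.symm⟩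
  have hRsymm : Symmetric R := by
    haveI : Std.Symm step := ⟨fun a b h => hsymm h⟩
    exact fun x y h => Std.Symm.symm (r := Relation.ReflTransGen step) x y h
  by_cases hcase : a = c ∨ R a c
  · -- connectivity case
    have hreach : ∀ j : Fin k, t j ≠ t (cyc j) → R (t j) (t (cyc j)) := by
      intro j hne
      by_cases hedge : cedge t j = e
      · have hpair : ({t j, t (cyc j)} : Finset (Fin n)) = {a, c} := by
          rw [← hee]
          exact hedge
        have hac : a ≠ c := by
          intro heq
          rw [heq] at hpair
          have := mem_pair_iff.mp (hpair ▸ mem_pair_iff.mpr (Or.inl rfl) :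
            t j ∈ ({c, c} : Finset (Fin n)))
          have h1 : t j = c := by
            have : t j ∈ ({c, c} : Finset (Fin n)) := by
              rw [← hpair]; simp [cedge]
            simpa using this
          have h2 : t (cyc j) = c := by
            have : t (cyc j) ∈ ({c, c} : Finset (Fin n)) := by
              rw [← hpair]; simp [cedge]
            simpa using this
          exact hne (h1.trans h2.symm)
        have hRac : R a c := by
          rcases hcase with h | h
          · exact absurd h hac
          · exact h
        rcases pair_cases hac hpair with ⟨h1, h2⟩ | ⟨h1, h2⟩
        · rw [h1, h2]; exact hRac
        · rw [h1, h2]; exact hRsymm hRac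
      · exact Relation.ReflTransGen.single
          ⟨Finset.mem_erase.mpr ⟨hedge, by
            exact Finset.mem_image.mpr ⟨j, Finset.mem_univ _, rfl⟩⟩, hne⟩
    have hwalk := walk_reach hk t F hreach
    have hcc := conn_card F (t ⟨0, hk⟩) (Finset.univ.image t) hwalk
    have h1 : ((Finset.univ.image t).erase (t ⟨0, hk⟩)).card
        = (Finset.univ.image t).card - 1 :=
      Finset.card_erase_of_mem (Finset.mem_image.mpr ⟨⟨0, hk⟩, Finset.mem_univ _, rfl⟩)
    have h2 : F.card = (edgeFinset t).card - 1 := Finset.card_erase_of_mem he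
    have h3 : 1 ≤ (Finset.univ.image t).card := Finset.card_pos.mpr
      ⟨t ⟨0, hk⟩, Finset.mem_image.mpr ⟨⟨0, hk⟩, Finset.mem_univ _, rfl⟩⟩
    have h4 : 1 ≤ (edgeFinset t).card := Finset.card_pos.mpr ⟨e, he⟩
    omega
  · -- parity case
    push_neg at hcase
    obtain ⟨hac, hnR⟩ := hcase
    exfalso
    set φ : Fin n → ZMod 2 := fun v => if R a v then 1 else 0 with hφ
    have hinv : ∀ x y : Fin n, step x y → (R a x ↔ R a y) := by
      intro x y hs
      constructor
      · intro h; exact h.tail hs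
      · intro h; exact h.tail (hsymm hs)
    have hsum0 : ∑ j : Fin k, (φ (t (cyc j)) - φ (t j)) = 0 := by
      rw [Finset.sum_sub_distrib]
      have : ∑ j : Fin k, φ (t (cyc j)) = ∑ j : Fin k, φ (t j) := by
        apply Fintype.sum_equiv (Equiv.addRight (⟨1 % k, Nat.mod_lt 1 hk⟩ : Fin k))
        intro j
        rfl
      rw [this, sub_self]
    have hterm : ∀ j : Fin k, φ (t (cyc j)) - φ (t j)
        = (if cedge t j = e then 1 else 0) := by
      intro j
      by_cases hedge : cedge t j = e
      · rw [if_pos hedge]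
        have hpair : ({t j, t (cyc j)} : Finset (Fin n)) = {a, c} := by
          rw [← hee]; exact hedge
        have hφa : φ a = 1 := by
          rw [hφ]
          simp only
          rw [if_pos Relation.ReflTransGen.refl]
        have hφc : φ c = 0 := by rw [hφ]; simp [hnR]
        rcases pair_cases hac hpair with ⟨h1, h2⟩ | ⟨h1, h2⟩
        · rw [h1, h2, hφa, hφc]; decide
        · rw [h1, h2, hφa, hφc]; decide
      · rw [if_neg hedge]
        by_cases hne : t j = t (cyc j)
        · rw [← hne, sub_self]
        · have hstep : step (t j) (t (cyc j)) :=
            ⟨Finset.mem_erase.mpr ⟨hedge,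
              Finset.mem_image.mpr ⟨j, Finset.mem_univ _, rfl⟩⟩, hne⟩
          have : φ (t j) = φ (t (cyc j)) := by
            rw [hφ]
            simp only
            by_cases hx : R a (t j)
            · rw [if_pos hx, if_pos ((hinv _ _ hstep).mp hx)]
            · rw [if_neg hx, if_neg (fun hy => hx ((hinv _ _ hstep).mpr hy))]
          rw [this, sub_self]
    have hsum2 : ∑ j : Fin k, (φ (t (cyc j)) - φ (t j)) = ((edgeMult t e : ℕ) : ZMod 2) := by
      rw [edgeMult, ← Finset.sum_boole]
      exact Finset.sum_congr rfl fun j _ => hterm j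
    have : ((edgeMult t e : ℕ) : ZMod 2) = 0 := by rw [← hsum2, hsum0]
    rw [ZMod.natCast_eq_zero_iff] at this
    rw [Nat.odd_iff] at hodd
    omega

end AuxVB

section AuxCount

variable {n k b : ℕ} {π : ℕ → ℕ}

theorem edgeMult_pos {t : Fin k → Fin n} {e : Finset (Fin n)} (he : e ∈ edgeFinset t) :
    1 ≤ edgeMult t e := by
  obtain ⟨j, _, hj⟩ := Finset.mem_image.mp he
  exact Finset.card_pos.mpr ⟨j, Finset.mem_filter.mpr ⟨Finset.mem_univ _, hj⟩⟩

theorem edgeMult_le (t : Fin k → Fin n) (e : Finset (Fin n)) : edgeMult t e ≤ k := by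
  calc edgeMult t e ≤ Finset.univ.card := Finset.card_filter_le _ _
    _ = k := Finset.card_fin k

theorem card_edgeFinset_eq {t : Fin k → Fin n} (ht : t ∈ Tprof n b k π) :
    (edgeFinset t).card = ∑ m ∈ Finset.Icc 1 k, π m := by
  have h1 : (edgeFinset t).card
      = ∑ m ∈ Finset.Icc 1 k, ((edgeFinset t).filter fun e => edgeMult t e = m).card :=
    Finset.card_eq_sum_card_fiberwise fun e he =>
      Finset.mem_Icc.mpr ⟨edgeMult_pos he, edgeMult_le t e⟩
  rw [h1]
  exact Finset.sum_congr rfl fun m _ => ht.2 m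

theorem exists_odd_edge {t : Fin k → Fin n} (ht : t ∈ Tprof n b k π)
    (hodd : ∃ i : ℕ, Odd i ∧ i ≤ k ∧ π i ≠ 0) :
    ∃ e ∈ edgeFinset t, Odd (edgeMult t e) := by
  obtain ⟨i, hi, _, hπi⟩ := hodd
  have : profileCount t i ≠ 0 := by rw [ht.2 i]; exact hπi
  have hne : ((Finset.univ.image (cedge t)).filter fun e => edgeMult t e = i).Nonempty :=
    Finset.card_pos.mp (Nat.pos_of_ne_zero this)
  obtain ⟨e, he⟩ := hne
  obtain ⟨he1, he2⟩ := Finset.mem_filter.mp he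
  exact ⟨e, he1, he2 ▸ hi⟩

/-- difference-needing steps, unconditional case. -/
def Jset (t : Fin k → Fin n) : Finset (Fin k) :=
  Finset.univ.filter fun j => j < fmin t j

/-- difference-needing steps, shared case. -/
def JsetB (U : Finset (Finset (Fin n))) (t : Fin k → Fin n) : Finset (Fin k) :=
  Finset.univ.filter fun j =>
    (j : ℕ) ≠ 0 ∧ j < fmin t j ∧ ¬(isFirstOcc t j ∧ cedge t j ∈ U)

/-- first occurrences of shared edges. -/
def SSset (U : Finset (Finset (Fin n))) (t : Fin k → Fin n) : Finset (Fin k) :=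
  Finset.univ.filter fun j => isFirstOcc t j ∧ cedge t j ∈ U

theorem firstOcc_inj {t : Fin k → Fin n} {j j' : Fin k} (h : isFirstOcc t j)
    (h' : isFirstOcc t j') (he : cedge t j = cedge t j') : j = j' := by
  rcases lt_trichotomy j j' with hlt | heq | hlt
  · exact absurd he (h' j hlt)
  · exact heq
  · exact absurd he.symm (h j' hlt)

theorem card_Jset_le (hk : 0 < k) (hn : 1 ≤ n) {t : Fin k → Fin n}
    (ht : t ∈ Tprof n b k π) (hodd : ∃ i : ℕ, Odd i ∧ i ≤ k ∧ π i ≠ 0) :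
    (Jset t).card ≤ (∑ m ∈ Finset.Icc 1 k, π m) - 1 := by
  classical
  have hinj : (Jset t).card ≤ ((Finset.univ.image t).erase (t ⟨0, hk⟩)).card := by
    apply Finset.card_le_card_of_injOn (fun j => t (cyc j))
    · intro j hj
      have hnew := new_arrival (Finset.mem_filter.mp hj).2
      refine Finset.mem_erase.mpr ⟨?_, Finset.mem_image.mpr ⟨cyc j, Finset.mem_univ _, rfl⟩⟩
      exact fun hc => hnew ⟨0, hk⟩ (Fin.le_def.mpr (Nat.zero_le _)) hc.symm
    · intro j hj j' hj' heq
      simp only [Finset.mem_coe] at hj hj'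
      have h1 := new_arrival (Finset.mem_filter.mp hj).2
      have h2 := new_arrival (Finset.mem_filter.mp hj').2
      rcases lt_trichotomy j j' with hlt | he | hlt
      · exact absurd heq (h2 (cyc j) (cyc_le hlt))
      · exact he
      · exact absurd heq.symm (h1 (cyc j') (cyc_le hlt))
  obtain ⟨e, he, hoe⟩ := exists_odd_edge ht hodd
  have hvb := vertex_bound hk hn he hoe
  have hcard := card_edgeFinset_eq ht
  have h0mem : t ⟨0, hk⟩ ∈ Finset.univ.image t :=
    Finset.mem_image.mpr ⟨⟨0, hk⟩, Finset.mem_univ _, rfl⟩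
  have herase := Finset.card_erase_of_mem h0mem
  omega

theorem card_SSset (U : Finset (Finset (Fin n))) (t : Fin k → Fin n) :
    (SSset U t).card = (edgeFinset t ∩ U).card := by
  classical
  apply Finset.card_bij (fun j _ => cedge t j)
  · intro j hj
    obtain ⟨_, hfo, hU⟩ := Finset.mem_filter.mp hj
    exact Finset.mem_inter.mpr ⟨Finset.mem_image.mpr ⟨j, Finset.mem_univ _, rfl⟩, hU⟩
  · intro j hj j' hj' he
    exact firstOcc_inj (Finset.mem_filter.mp hj).2.1 (Finset.mem_filter.mp hj').2.1 he
  · intro e he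
    obtain ⟨heE, heU⟩ := Finset.mem_inter.mp he
    obtain ⟨j, _, hj⟩ := Finset.mem_image.mp heE
    have hne : (Finset.univ.filter fun j' => cedge t j' = e).Nonempty :=
      ⟨j, Finset.mem_filter.mpr ⟨Finset.mem_univ _, hj⟩⟩
    set j0 := (Finset.univ.filter fun j' => cedge t j' = e).min' hne with hj0def
    have hj0mem := Finset.min'_mem _ hne
    have hj0e : cedge t j0 = e := (Finset.mem_filter.mp hj0mem).2
    have hfo : isFirstOcc t j0 := by
      intro j' hj' hce
      have hmem : j' ∈ Finset.univ.filter fun j'' => cedge t j'' = e :=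
        Finset.mem_filter.mpr ⟨Finset.mem_univ _, hce.trans hj0e⟩
      exact absurd hj' (not_lt.mpr (Finset.min'_le _ _ hmem))
    exact ⟨j0, Finset.mem_filter.mpr ⟨Finset.mem_univ _, hfo,
      by rw [hj0e]; exact heU⟩, hj0e⟩

theorem card_JsetB_le {U : Finset (Finset (Fin n))} {t : Fin k → Fin n} {l : ℕ}
    (hcap : (edgeFinset t ∩ U).card = l) (hE : (edgeFinset t).card = ∑ m ∈ Finset.Icc 1 k, π m) :
    (JsetB U t).card ≤ (∑ m ∈ Finset.Icc 1 k, π m) - l := by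
  classical
  have hinj : (JsetB U t).card ≤ (edgeFinset t \ U).card := by
    apply Finset.card_le_card_of_injOn (fun j => cedge t j)
    · intro j hj
      obtain ⟨_, hj0, hjf, hjn⟩ := Finset.mem_filter.mp hj
      have hfo := new_arrival_firstOcc hjf
      refine Finset.mem_sdiff.mpr ⟨Finset.mem_image.mpr ⟨j, Finset.mem_univ _, rfl⟩, ?_⟩
      intro hU
      exact hjn ⟨hfo, hU⟩
    · intro j hj j' hj' he
      simp only [Finset.mem_coe] at hj hj'
      have h1 := new_arrival_firstOcc (Finset.mem_filter.mp hj).2.2.1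
      have h2 := new_arrival_firstOcc (Finset.mem_filter.mp hj').2.2.1
      exact firstOcc_inj h1 h2 he
  have hsd := Finset.card_inter_add_card_sdiff (edgeFinset t) U
  omega

end AuxCount

section AuxInj

variable {n k b : ℕ}

/-- injectivity, unconditional case. -/
theorem injA (hk : 0 < k) (hn : 1 ≤ n) {t u : Fin k → Fin n}
    (h0 : t ⟨0, hk⟩ = u ⟨0, hk⟩)
    (hf : ∀ j, fmin t j = fmin u j)
    (hJd : ∀ j : Fin k, j < fmin t j → diff t j = diff u j) : t = u := by
  have key : ∀ m : ℕ, ∀ hm : m < k, t ⟨m, hm⟩ = u ⟨m, hm⟩ := by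
    intro m
    induction m using Nat.strong_induction_on with
    | _ m ih =>
      intro hm
      match m with
      | 0 => exact h0
      | p + 1 =>
        have hp : p < k := by omega
        set j : Fin k := ⟨p, hp⟩ with hj
        have hcyc : cyc j = ⟨p + 1, hm⟩ := cyc_succ hm
        by_cases hnew : j < fmin t j
        · have hdq := hJd j hnew
          have := diff_decode hn hdq (ih p (by omega) hp)
          rwa [hcyc] at this
        · push_neg at hnew
          have hle : ((fmin t j : ℕ)) ≤ p := hnew
          have e1 : t (fmin t j) = t (cyc j) := fmin_spec t j
          have e2 : u (fmin u j) = u (cyc j) := fmin_spec u j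
          have e3 : t (fmin t j) = u (fmin t j) := by
            have := ih (fmin t j) (by omega) (fmin t j).isLt
            simpa [Fin.eta] using this
          rw [← hcyc, ← e1, e3, hf, e2]
  funext j
  have := key (j : ℕ) j.isLt
  simpa [Fin.eta] using this

/-- injectivity, shared case. -/
theorem injB (hk : 0 < k) (hn : 1 ≤ n) {U : Finset (Finset (Fin n))}
    {t u : Fin k → Fin n}
    (h0 : t ⟨0, hk⟩ = u ⟨0, hk⟩)
    (h0SS : (⟨0, hk⟩ : Fin k) ∈ SSset U t)
    (hSSeq : SSset U t = SSset U u)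
    (hf : ∀ j, fmin t j = fmin u j)
    (hE : ∀ j ∈ SSset U t, cedge t j = cedge u j)
    (hJd : ∀ j : Fin k, 1 ≤ (j : ℕ) → j < fmin t j → cedge t j ∉ U →
      diff t j = diff u j) : t = u := by
  have key : ∀ m : ℕ, ∀ hm : m < k, t ⟨m, hm⟩ = u ⟨m, hm⟩ := by
    intro m
    induction m using Nat.strong_induction_on with
    | _ m ih =>
      intro hm
      match m with
      | 0 => exact h0
      | p + 1 =>
        have hp : p < k := by omega
        set j : Fin k := ⟨p, hp⟩ with hj
        have hcyc : cyc j = ⟨p + 1, hm⟩ := cyc_succ hm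
        have hjj : t j = u j := by
          have := ih p (by omega) hp
          simpa using this
        by_cases hSS : j ∈ SSset U t
        · -- shared first-occurrence step: decode via common edge
          have hce := hE j hSS
          have harr : t (cyc j) = u (cyc j) := by
            have h1 : cedge t j = ({t j, t (cyc j)} : Finset (Fin n)) := rfl
            have h2 : cedge u j = ({u j, u (cyc j)} : Finset (Fin n)) := rfl
            have : ({t j, t (cyc j)} : Finset (Fin n)) = {u j, u (cyc j)} := by
              rw [← h1, ← h2, hce]
            exact pair_right this hjj
          rwa [hcyc] at harr
        · by_cases hnew : j < fmin t j
          · -- new arrival, unshared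
            have hj1 : 1 ≤ (j : ℕ) := by
              rcases Nat.eq_zero_or_pos p with h | h
              · exfalso
                apply hSS
                have : j = (⟨0, hk⟩ : Fin k) := by
                  apply Fin.ext
                  simpa using h
                rw [this]
                exact h0SS
              · show 1 ≤ p
                exact h
            have hnU : cedge t j ∉ U := by
              intro hU
              exact hSS (Finset.mem_filter.mpr
                ⟨Finset.mem_univ _, new_arrival_firstOcc hnew, hU⟩)
            have hdq := hJd j hj1 hnew hnU
            have := diff_decode hn hdq hjj
            rwa [hcyc] at this
          · push_neg at hnew
            have hle : ((fmin t j : ℕ)) ≤ p := hnew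
            have e1 : t (fmin t j) = t (cyc j) := fmin_spec t j
            have e2 : u (fmin u j) = u (cyc j) := fmin_spec u j
            have e3 : t (fmin t j) = u (fmin t j) := by
              have := ih (fmin t j) (by omega) (fmin t j).isLt
              simpa [Fin.eta] using this
            rw [← hcyc, ← e1, e3, hf, e2]
  funext j
  have := key (j : ℕ) j.isLt
  simpa [Fin.eta] using this

end AuxInj

section AuxEnc

variable {n k s b : ℕ}

/-- the predicate selecting coordinates with positive prescribed overlap. -/
def Pp {s : ℕ} (L : Fin s → ℕ) (i : Fin s) : Prop := 0 < (i : ℕ) ∧ 1 ≤ L i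

instance {s : ℕ} (L : Fin s → ℕ) (i : Fin s) : Decidable (Pp L i) := by
  unfold Pp; infer_instance

/-- union of edge sets of earlier tuples. -/
def Uset (T : Fin s → Fin k → Fin n) (i : Fin s) : Finset (Finset (Fin n)) :=
  (Finset.univ.filter fun j : Fin s => j < i).biUnion fun j => edgeFinset (T j)

/-- first index whose edge is shared with `Uset`. -/
noncomputable def rsel [NeZero k] (T : Fin s → Fin k → Fin n) (i : Fin s) : Fin k :=
  if hne : (Finset.univ.filter fun j : Fin k => cedge (T i) j ∈ Uset T i).Nonempty
  then (Finset.univ.filter fun j : Fin k => cedge (T i) j ∈ Uset T i).min' hne else 0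

theorem rsel_mem [NeZero k] {T : Fin s → Fin k → Fin n} {i : Fin s}
    (hne : (Finset.univ.filter fun j : Fin k => cedge (T i) j ∈ Uset T i).Nonempty) :
    cedge (T i) (rsel T i) ∈ Uset T i := by
  rw [rsel, dif_pos hne]
  exact (Finset.mem_filter.mp (Finset.min'_mem _ hne)).2

/-- the working tuple: rotated in the shared case. -/
noncomputable def ttf [NeZero k] (L : Fin s → ℕ) (T : Fin s → Fin k → Fin n) (i : Fin s) :
    Fin k → Fin n :=
  if Pp L i then rot (rsel T i) (T i) else T i

/-- minimum of an edge set (with junk value). -/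
def emin [NeZero n] (e : Finset (Fin n)) : Fin n :=
  if h : e.Nonempty then e.min' h else 0

theorem pair_not_emin [NeZero n] {a c x y : Fin n} (hx : x ∈ ({a, c} : Finset (Fin n)))
    (hy : y ∈ ({a, c} : Finset (Fin n))) (hx' : x ≠ emin ({a, c} : Finset (Fin n)))
    (hy' : y ≠ emin ({a, c} : Finset (Fin n))) : x = y := by
  have hne : ({a, c} : Finset (Fin n)).Nonempty := Finset.insert_nonempty _ _
  have hmin : emin ({a, c} : Finset (Fin n)) = ({a, c} : Finset (Fin n)).min' hne := by
    rw [emin, dif_pos hne]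
  have hminmem : emin ({a, c} : Finset (Fin n)) ∈ ({a, c} : Finset (Fin n)) := by
    rw [hmin]; exact Finset.min'_mem _ _
  rcases mem_pair_iff.mp hx with h1 | h1 <;>
    rcases mem_pair_iff.mp hy with h2 | h2 <;>
      rcases mem_pair_iff.mp hminmem with h3 | h3 <;>
        first
          | (exact h1.trans h2.symm)
          | (exfalso; exact hx' (h1.trans h3.symm))
          | (exfalso; exact hy' (h2.trans h3.symm))

/-- the bit data of step `j`. -/
noncomputable def bitv [NeZero n] [NeZero k] (L : Fin s → ℕ) (T : Fin s → Fin k → Fin n)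
    (i : Fin s) (j : Fin k) : ℕ :=
  if Pp L i then
    (if (j : ℕ) = 0 then (if ttf L T i j = emin (cedge (ttf L T i) j) then 1 else 0)
      else (if isFirstOcc (ttf L T i) j ∧ cedge (ttf L T i) j ∈ Uset T i then 1 else 0))
  else 0

def aaf (n k : ℕ) {s : ℕ} (L : Fin s → ℕ) (i : Fin s) : ℕ := if Pp L i then k else n
def ccf {s : ℕ} (L : Fin s → ℕ) (i : Fin s) : ℕ := if Pp L i then 2 else 1
def mmf {s : ℕ} (L : Fin s → ℕ) (i : Fin s) : ℕ := if Pp L i then L i else 0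
def eef (k : ℕ) (π : ℕ → ℕ) {s : ℕ} (L : Fin s → ℕ) (i : Fin s) : ℕ :=
  if Pp L i then (∑ m ∈ Finset.Icc 1 k, π m) - L i else (∑ m ∈ Finset.Icc 1 k, π m) - 1

/-- the set of difference-needing steps. -/
noncomputable def Jsel [NeZero k] (L : Fin s → ℕ) (T : Fin s → Fin k → Fin n) (i : Fin s) :
    Finset (Fin k) :=
  if Pp L i then JsetB (Uset T i) (ttf L T i) else Jset (ttf L T i)

/-- the start data. -/
noncomputable def startv [NeZero k] (L : Fin s → ℕ) (T : Fin s → Fin k → Fin n)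
    (i : Fin s) : ℕ :=
  if Pp L i then (rsel T i : ℕ) else (T i 0 : ℕ)

theorem startv_lt [NeZero k] (hn : 0 < n) (L : Fin s → ℕ) (T : Fin s → Fin k → Fin n)
    (i : Fin s) : startv L T i < aaf n k L i := by
  rw [startv, aaf]
  split_ifs
  · exact (rsel T i).isLt
  · exact (T i 0).isLt

theorem bitv_lt [NeZero n] [NeZero k] (L : Fin s → ℕ) (T : Fin s → Fin k → Fin n)
    (i : Fin s) (j : Fin k) : bitv L T i j < ccf L i := by
  rw [bitv, ccf]
  split_ifs <;> omega

/-- the shared-edge data. -/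
noncomputable def sigv [NeZero s] [NeZero k] (L : Fin s → ℕ) (T : Fin s → Fin k → Fin n)
    (i : Fin s) (q : ℕ) : Fin s × Fin k :=
  indexWith (SSset (Uset T i) (ttf L T i))
    (fun j => if h2 : ∃ p : Fin s × Fin k, ((p.1 : ℕ) < (i : ℕ)) ∧
        cedge (T p.1) p.2 = cedge (ttf L T i) j
      then Classical.choose h2 else (0, 0)) (0, 0) q

/-- the difference data. -/
noncomputable def dsv [NeZero k] (b : ℕ) (L : Fin s → ℕ) (T : Fin s → Fin k → Fin n)
    (i : Fin s) (d0 : {x : ZMod n // x ∈ dset n b}) (q : ℕ) :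
    {x : ZMod n // x ∈ dset n b} :=
  indexWith (Jsel L T i)
    (fun j => if h : diff (ttf L T i) j ∈ dset n b then ⟨diff (ttf L T i) j, h⟩ else d0)
    d0 q

theorem ite01 {Q Q' : Prop} [Decidable Q] [Decidable Q']
    (h : (if Q then (1 : ℕ) else 0) = (if Q' then 1 else 0)) : Q ↔ Q' := by
  by_cases h1 : Q <;> by_cases h2 : Q' <;> simp [h1, h2] at h ⊢

theorem Uset_congr {T T' : Fin s → Fin k → Fin n} {i : Fin s}
    (h : ∀ j : Fin s, j < i → T j = T' j) : Uset T i = Uset T' i := by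
  unfold Uset
  apply Finset.biUnion_congr rfl
  intro j hj
  rw [h j (Finset.mem_filter.mp hj).2]

end AuxEnc

set_option maxHeartbeats 1000000 in
set_option synthInstance.maxHeartbeats 400000 in
/-- Counting bound for families of tuples with prescribed edge overlaps
(Lemma on overlap set counts). -/
theorem stmt6 (k n b : ℕ) (hk : 1 ≤ k) (hn : 1 ≤ n) (hb : IsBandwidth n b)
    (π : ℕ → ℕ) (hπ : IsProfile k π)
    (hodd : ∃ i : ℕ, Odd i ∧ i ≤ k ∧ π i ≠ 0)
    (s : ℕ) (hs : 2 ≤ s) (L : Fin s → ℕ)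
    (hL : ∀ i : Fin s, 0 < (i : ℕ) → L i ≤ ∑ m ∈ Finset.Icc 1 k, π m)
    (hLne : ∃ i : Fin s, 0 < (i : ℕ) ∧ L i ≠ 0) :
    Nat.card (TprofOv n b k s π L) ≤
      k ^ k * n * b ^ ((∑ m ∈ Finset.Icc 1 k, π m) - 1) *
      (∏ i ∈ Finset.univ.filter fun i : Fin s => 0 < (i : ℕ) ∧ L i = 0,
        k ^ k * n * b ^ ((∑ m ∈ Finset.Icc 1 k, π m) - 1)) *
      (∏ i ∈ Finset.univ.filter fun i : Fin s => 0 < (i : ℕ) ∧ 1 ≤ L i,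
        (2 * k) ^ k * k * (k * s) ^ (L i) * b ^ ((∑ m ∈ Finset.Icc 1 k, π m) - L i)) := by
  classical
  haveI : NeZero n := ⟨by omega⟩
  haveI : NeZero k := ⟨by omega⟩
  haveI : NeZero s := ⟨by omega⟩
  have hk0 : 0 < k := hk
  set N := ∑ m ∈ Finset.Icc 1 k, π m with hNdef
  have hd0 : (dset n b).Nonempty := dset_nonempty hn
  set d0 : {x : ZMod n // x ∈ dset n b} := ⟨hd0.choose, hd0.choose_spec⟩ with hd0def
  set z0 : Fin k := ⟨0, hk0⟩ with hz0
  -- the encoding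
  set Φ : ↥(TprofOv n b k s π L) →
      (∀ i : Fin s, Fin (aaf n k L i) × (Fin k → Fin k × Fin (ccf L i)) ×
        (Fin (mmf L i) → Fin s × Fin k) × (Fin (eef k π L i) → {x : ZMod n // x ∈ dset n b})) :=
    fun Tsub i =>
      (⟨startv L Tsub.1 i, startv_lt hn L Tsub.1 i⟩,
        fun j => (fmin (ttf L Tsub.1 i) j, ⟨bitv L Tsub.1 i j, bitv_lt L Tsub.1 i j⟩),
        fun q => sigv L Tsub.1 i (q : ℕ),
        fun q => dsv b L Tsub.1 i d0 (q : ℕ)) with hΦdef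
  have hΦinj : Function.Injective Φ := by
    rintro ⟨T, hT⟩ ⟨T', hT'⟩ hΦeq
    have hTT : ∀ i, T i ∈ Tprof n b k π := hT.1
    have hTT' : ∀ i, T' i ∈ Tprof n b k π := hT'.1
    apply Subtype.ext
    have KEY : ∀ m : ℕ, ∀ i : Fin s, (i : ℕ) = m → T i = T' i := by
      intro m
      induction m using Nat.strong_induction_on with
      | _ m ih =>
        intro i him
        have hprev : ∀ j : Fin s, j < i → T j = T' j := fun j hj =>
          ih (j : ℕ) (him ▸ Fin.lt_def.mp hj) j rfl
        -- extract the component equalities at coordinate i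
        have hps := congrFun hΦeq i
        rw [hΦdef] at hps
        simp only [Prod.mk.injEq] at hps
        obtain ⟨h1, h2, h3, h4⟩ := hps
        have h1' : startv L T i = startv L T' i := by
          have := congrArg Fin.val h1
          simpa using this
        have hfm : ∀ j, fmin (ttf L T i) j = fmin (ttf L T' i) j := by
          intro j
          have := congrFun h2 j
          rw [Prod.mk.injEq] at this
          exact this.1
        have hbit : ∀ j, bitv L T i j = bitv L T' i j := by
          intro j
          have := congrFun h2 j
          rw [Prod.mk.injEq] at this
          have := congrArg Fin.val this.2
          simpa using this
        have hsig : ∀ q : ℕ, q < mmf L i → sigv L T i q = sigv L T' i q := by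
          intro q hq
          exact congrFun h3 ⟨q, hq⟩
        have hds : ∀ q : ℕ, q < eef k π L i → dsv b L T i d0 q = dsv b L T' i d0 q := by
          intro q hq
          exact congrFun h4 ⟨q, hq⟩
        by_cases hPi : Pp L i
        · -- shared case
          have hLi1 : 1 ≤ L i := hPi.2
          have hipos : 0 < (i : ℕ) := hPi.1
          have hcap : (edgeFinset (T i) ∩ Uset T i).card = L i := hT.2 i hipos
          have hcap' : (edgeFinset (T' i) ∩ Uset T' i).card = L i := hT'.2 i hipos
          have hU : Uset T' i = Uset T i := (Uset_congr hprev).symm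
          have hne : (Finset.univ.filter fun j : Fin k =>
              cedge (T i) j ∈ Uset T i).Nonempty := by
            have hpos : 0 < (edgeFinset (T i) ∩ Uset T i).card := by omega
            obtain ⟨e, he⟩ := Finset.card_pos.mp hpos
            obtain ⟨heE, heU⟩ := Finset.mem_inter.mp he
            obtain ⟨j, _, hj⟩ := Finset.mem_image.mp heE
            exact ⟨j, Finset.mem_filter.mpr ⟨Finset.mem_univ _, by rw [hj]; exact heU⟩⟩
          have hne' : (Finset.univ.filter fun j : Fin k =>
              cedge (T' i) j ∈ Uset T' i).Nonempty := by
            have hpos : 0 < (edgeFinset (T' i) ∩ Uset T' i).card := by omega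
            obtain ⟨e, he⟩ := Finset.card_pos.mp hpos
            obtain ⟨heE, heU⟩ := Finset.mem_inter.mp he
            obtain ⟨j, _, hj⟩ := Finset.mem_image.mp heE
            exact ⟨j, Finset.mem_filter.mpr ⟨Finset.mem_univ _, by rw [hj]; exact heU⟩⟩
          have hrr : rsel T i = rsel T' i := by
            apply Fin.ext
            have e1 : startv L T i = (rsel T i : ℕ) := by rw [startv, if_pos hPi]
            have e2 : startv L T' i = (rsel T' i : ℕ) := by rw [startv, if_pos hPi]
            rw [← e1, ← e2, h1']
          have htt : ttf L T i = rot (rsel T i) (T i) := by rw [ttf, if_pos hPi]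
          have huu : ttf L T' i = rot (rsel T i) (T' i) := by rw [ttf, if_pos hPi, hrr]
          have htrel : TupRel n b (ttf L T i) := by
            rw [htt]; exact tupRel_rot _ (hTT i).1
          have hurel : TupRel n b (ttf L T' i) := by
            rw [huu]; exact tupRel_rot _ (hTT' i).1
          have hedget : edgeFinset (ttf L T i) = edgeFinset (T i) := by
            rw [htt]; exact edgeFinset_rot _ _
          have hedgeu : edgeFinset (ttf L T' i) = edgeFinset (T' i) := by
            rw [huu]; exact edgeFinset_rot _ _
          have hcapt : (edgeFinset (ttf L T i) ∩ Uset T i).card = L i := by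
            rw [hedget]; exact hcap
          have hcapu : (edgeFinset (ttf L T' i) ∩ Uset T i).card = L i := by
            rw [hedgeu, ← hU]; exact hcap'
          have hNt : (edgeFinset (ttf L T i)).card = N := by
            rw [hedget]; exact card_edgeFinset_eq (hTT i)
          have hSScard : (SSset (Uset T i) (ttf L T i)).card = L i := by
            rw [card_SSset]; exact hcapt
          have hz : z0 = (0 : Fin k) := by apply Fin.ext; simp [hz0]
          have hfo0 : ∀ v : Fin k → Fin n, isFirstOcc v z0 := by
            intro v j' hj' _
            have := Fin.lt_def.mp hj'
            simp [hz0] at this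
          have hcz0 : cedge (ttf L T i) z0 ∈ Uset T i := by
            rw [htt, hz, cedge_rot, zero_add]
            exact rsel_mem hne
          have hcz0' : cedge (ttf L T' i) z0 ∈ Uset T i := by
            rw [huu, hz, cedge_rot, zero_add, hrr, ← hU]
            exact rsel_mem hne'
          have h0SS : z0 ∈ SSset (Uset T i) (ttf L T i) :=
            Finset.mem_filter.mpr ⟨Finset.mem_univ _, hfo0 _, hcz0⟩
          have h0SS' : z0 ∈ SSset (Uset T i) (ttf L T' i) :=
            Finset.mem_filter.mpr ⟨Finset.mem_univ _, hfo0 _, hcz0'⟩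
          have hbitiff : ∀ j : Fin k, (j : ℕ) ≠ 0 →
              ((isFirstOcc (ttf L T i) j ∧ cedge (ttf L T i) j ∈ Uset T i) ↔
                (isFirstOcc (ttf L T' i) j ∧ cedge (ttf L T' i) j ∈ Uset T i)) := by
            intro j hj
            have hbj := hbit j
            rw [bitv, bitv, if_pos hPi, if_pos hPi, if_neg hj, if_neg hj] at hbj
            have := ite01 hbj
            rwa [hU] at this
          have hSSeq : SSset (Uset T i) (ttf L T i) = SSset (Uset T i) (ttf L T' i) := by
            apply Finset.ext
            intro j
            by_cases hj : (j : ℕ) = 0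
            · have hjz : j = z0 := by apply Fin.ext; simp [hz0, hj]
              rw [hjz]
              exact iff_of_true h0SS h0SS'
            · simp only [SSset, Finset.mem_filter, Finset.mem_univ, true_and]
              exact hbitiff j hj
          have hE : ∀ j ∈ SSset (Uset T i) (ttf L T i),
              cedge (ttf L T i) j = cedge (ttf L T' i) j := by
            intro j hj
            have hjmem' : j ∈ SSset (Uset T i) (ttf L T' i) := hSSeq ▸ hj
            have hcet : cedge (ttf L T i) j ∈ Uset T i := (Finset.mem_filter.mp hj).2.2
            have hceu : cedge (ttf L T' i) j ∈ Uset T i := (Finset.mem_filter.mp hjmem').2.2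
            have hp2 : ∃ p : Fin s × Fin k, ((p.1 : ℕ) < (i : ℕ)) ∧
                cedge (T p.1) p.2 = cedge (ttf L T i) j := by
              obtain ⟨j', hj'mem, he⟩ := Finset.mem_biUnion.mp hcet
              obtain ⟨mE, _, hmE⟩ := Finset.mem_image.mp he
              exact ⟨(j', mE), Fin.lt_def.mp (Finset.mem_filter.mp hj'mem).2, hmE⟩
            have hp2' : ∃ p : Fin s × Fin k, ((p.1 : ℕ) < (i : ℕ)) ∧
                cedge (T' p.1) p.2 = cedge (ttf L T' i) j := by
              have hceu2 : cedge (ttf L T' i) j ∈ Uset T' i := by rwa [hU]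
              obtain ⟨j', hj'mem, he⟩ := Finset.mem_biUnion.mp hceu2
              obtain ⟨mE, _, hmE⟩ := Finset.mem_image.mp he
              exact ⟨(j', mE), Fin.lt_def.mp (Finset.mem_filter.mp hj'mem).2, hmE⟩
            have hq : rank (SSset (Uset T i) (ttf L T i)) j < mmf L i := by
              rw [mmf, if_pos hPi]
              have := rank_lt_card hj
              omega
            have hsg := hsig _ hq
            simp only [sigv] at hsg
            rw [hU, hSSeq] at hsg
            rw [indexWith_spec _ _ hjmem', indexWith_spec _ _ hjmem'] at hsg
            rw [dif_pos hp2, dif_pos hp2'] at hsg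
            have hspec := Classical.choose_spec hp2
            have hspec' := Classical.choose_spec hp2'
            rw [← hspec.2, ← hspec'.2, hsg,
              hprev (Classical.choose hp2').1 (Fin.lt_def.mpr hspec'.1)]
          have h0 : ttf L T i z0 = ttf L T' i z0 := by
            have hez0 : cedge (ttf L T i) z0 = cedge (ttf L T' i) z0 := hE z0 h0SS
            have hb0 := hbit z0
            have hz0v : ((z0 : Fin k) : ℕ) = 0 := by simp [hz0]
            rw [bitv, bitv, if_pos hPi, if_pos hPi, if_pos hz0v, if_pos hz0v] at hb0
            have hiff := ite01 hb0
            rw [hez0] at hiff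
            by_cases hcase : ttf L T' i z0 = emin (cedge (ttf L T' i) z0)
            · exact (hiff.mpr hcase).trans hcase.symm
            · have hx : ttf L T i z0 ∈ cedge (ttf L T' i) z0 := by
                rw [← hez0]; exact mem_cedge_left _ _
              have hy : ttf L T' i z0 ∈ cedge (ttf L T' i) z0 := mem_cedge_left _ _
              have hx' : ttf L T i z0 ≠ emin (cedge (ttf L T' i) z0) :=
                fun hc => hcase (hiff.mp hc)
              exact pair_not_emin hx hy hx' hcase
          have hJeqB : JsetB (Uset T i) (ttf L T i) = JsetB (Uset T i) (ttf L T' i) := by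
            apply Finset.ext
            intro j
            simp only [JsetB, Finset.mem_filter, Finset.mem_univ, true_and]
            constructor
            · rintro ⟨hj0, hjf, hjn⟩
              exact ⟨hj0, hfm j ▸ hjf, fun hc => hjn ((hbitiff j hj0).mpr hc)⟩
            · rintro ⟨hj0, hjf, hjn⟩
              exact ⟨hj0, (hfm j).symm ▸ hjf, fun hc => hjn ((hbitiff j hj0).mp hc)⟩
          have hJdB : ∀ j : Fin k, 1 ≤ (j : ℕ) → j < fmin (ttf L T i) j →
              cedge (ttf L T i) j ∉ Uset T i →
              diff (ttf L T i) j = diff (ttf L T' i) j := by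
            intro j h1j hjf hjn
            have hjJ : j ∈ JsetB (Uset T i) (ttf L T i) :=
              Finset.mem_filter.mpr ⟨Finset.mem_univ _, by omega, hjf,
                fun hc => hjn hc.2⟩
            have hjJ' : j ∈ JsetB (Uset T i) (ttf L T' i) := hJeqB ▸ hjJ
            have hrk : rank (JsetB (Uset T i) (ttf L T i)) j < eef k π L i := by
              rw [eef, if_pos hPi]
              have hle := card_JsetB_le hcapt hNt
              have := rank_lt_card hjJ
              have hLN := hL i hipos
              omega
            have hq := hds _ hrk
            simp only [dsv, Jsel, if_pos hPi] at hq
            rw [hU, hJeqB] at hq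
            rw [indexWith_spec _ _ hjJ', indexWith_spec _ _ hjJ'] at hq
            rw [dif_pos (diff_mem_dset hn hb htrel j),
              dif_pos (diff_mem_dset hn hb hurel j)] at hq
            simpa using hq
          have heq : ttf L T i = ttf L T' i :=
            injB hk0 hn h0 h0SS hSSeq hfm hE hJdB
          rw [htt, huu] at heq
          exact rot_injective _ heq
        · -- unconditional case
          have ht_id : ttf L T i = T i := by rw [ttf, if_neg hPi]
          have hu_id : ttf L T' i = T' i := by rw [ttf, if_neg hPi]
          simp only [ht_id, hu_id] at hfm
          have h00 : T i z0 = T' i z0 := by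
            have e1 : startv L T i = (T i 0 : ℕ) := by rw [startv, if_neg hPi]
            have e2 : startv L T' i = (T' i 0 : ℕ) := by rw [startv, if_neg hPi]
            have hz : z0 = (0 : Fin k) := by
              apply Fin.ext
              simp [hz0]
            rw [hz]
            apply Fin.ext
            rw [← e1, ← e2, h1']
          have hJeq : Jset (T i) = Jset (T' i) := by
            apply Finset.ext
            intro j
            simp only [Jset, Finset.mem_filter, Finset.mem_univ, true_and]
            rw [hfm j]
          have hJd : ∀ j : Fin k, j < fmin (T i) j → diff (T i) j = diff (T' i) j := by
            intro j hj
            have hjJ : j ∈ Jset (T i) := Finset.mem_filter.mpr ⟨Finset.mem_univ _, hj⟩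
            have hjJ' : j ∈ Jset (T' i) := hJeq ▸ hjJ
            have hrk : rank (Jset (T i)) j < eef k π L i := by
              have hle := card_Jset_le hk0 hn (hTT i) hodd
              have := rank_lt_card hjJ
              rw [eef, if_neg hPi]
              omega
            have hq := hds (rank (Jset (T i)) j) hrk
            simp only [dsv, Jsel, if_neg hPi, ht_id, hu_id] at hq
            rw [hJeq] at hq
            rw [indexWith_spec _ _ hjJ', indexWith_spec _ _ hjJ'] at hq
            rw [dif_pos (diff_mem_dset hn hb (hTT i).1 j),
              dif_pos (diff_mem_dset hn hb (hTT' i).1 j)] at hq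
            simpa using hq
          exact injA hk0 hn h00 hfm hJd
    funext i
    exact KEY (i : ℕ) i rfl
  -- cardinality computation
  have hbound := Nat.card_le_card_of_injective Φ hΦinj
  rw [Nat.card_pi] at hbound
  have hdc : (dset n b).card ≤ b := card_dset hn hb
  have hcardC : ∀ i : Fin s,
      Nat.card (Fin (aaf n k L i) × (Fin k → Fin k × Fin (ccf L i)) ×
        (Fin (mmf L i) → Fin s × Fin k) ×
        (Fin (eef k π L i) → {x : ZMod n // x ∈ dset n b}))
      = aaf n k L i * ((k * ccf L i) ^ k *
          ((s * k) ^ (mmf L i) * (dset n b).card ^ (eef k π L i))) := by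
    intro i
    rw [Nat.card_eq_fintype_card]
    simp only [Fintype.card_prod, Fintype.card_fun, Fintype.card_coe, Fintype.card_fin]
  set A := k ^ k * n * b ^ (N - 1) with hA
  have hfacN : ∀ i : Fin s, ¬ Pp L i →
      aaf n k L i * ((k * ccf L i) ^ k *
        ((s * k) ^ (mmf L i) * (dset n b).card ^ (eef k π L i))) ≤ A := by
    intro i hPi
    rw [aaf, ccf, mmf, eef, if_neg hPi, if_neg hPi, if_neg hPi, if_neg hPi, hA]
    rw [← hNdef]
    calc n * ((k * 1) ^ k * ((s * k) ^ 0 * (dset n b).card ^ (N - 1)))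
        = k ^ k * n * (dset n b).card ^ (N - 1) := by ring
      _ ≤ k ^ k * n * b ^ (N - 1) :=
          Nat.mul_le_mul_left _ (Nat.pow_le_pow_left hdc _)
  have hfacP : ∀ i : Fin s, Pp L i →
      aaf n k L i * ((k * ccf L i) ^ k *
        ((s * k) ^ (mmf L i) * (dset n b).card ^ (eef k π L i))) ≤
      (2 * k) ^ k * k * (k * s) ^ (L i) * b ^ (N - L i) := by
    intro i hPi
    rw [aaf, ccf, mmf, eef, if_pos hPi, if_pos hPi, if_pos hPi, if_pos hPi]
    rw [← hNdef]
    calc k * ((k * 2) ^ k * ((s * k) ^ (L i) * (dset n b).card ^ (N - L i)))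
        = (2 * k) ^ k * k * (k * s) ^ (L i) * (dset n b).card ^ (N - L i) := by
          rw [mul_comm k 2, mul_comm s k]; ring
      _ ≤ (2 * k) ^ k * k * (k * s) ^ (L i) * b ^ (N - L i) :=
          Nat.mul_le_mul_left _ (Nat.pow_le_pow_left hdc _)
  set i0 : Fin s := ⟨0, by omega⟩ with hi0
  have hsplit : (Finset.univ.filter fun i : Fin s => ¬ Pp L i)
      = insert i0 (Finset.univ.filter fun i : Fin s => 0 < (i : ℕ) ∧ L i = 0) := by
    apply Finset.ext
    intro x
    rw [Finset.mem_filter]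
    simp only [Finset.mem_filter, Finset.mem_univ, true_and, Finset.mem_insert, Pp]
    constructor
    · intro hx
      by_cases hx0 : (x : ℕ) = 0
      · exact Or.inl (Fin.ext (by simp [hi0, hx0]))
      · right
        constructor
        · omega
        · omega
    · intro hx
      rcases hx with hx | hx
      · rw [hx]
        simp [hi0]
      · omega
  have hi0notin : i0 ∉ (Finset.univ.filter fun i : Fin s => 0 < (i : ℕ) ∧ L i = 0) := by
    simp [hi0]
  have hPi0 : ¬ Pp L i0 := by
    rw [Pp]
    simp [hi0]
  -- assemble
  have hprodsplit :
      (∏ i : Fin s, Nat.card (Fin (aaf n k L i) × (Fin k → Fin k × Fin (ccf L i)) ×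
        (Fin (mmf L i) → Fin s × Fin k) ×
        (Fin (eef k π L i) → {x : ZMod n // x ∈ dset n b})))
      ≤ A * (∏ _i ∈ Finset.univ.filter fun i : Fin s => 0 < (i : ℕ) ∧ L i = 0, A) *
        (∏ i ∈ Finset.univ.filter fun i : Fin s => 0 < (i : ℕ) ∧ 1 ≤ L i,
          (2 * k) ^ k * k * (k * s) ^ (L i) * b ^ (N - L i)) := by
    have hre : (Finset.univ.filter fun i : Fin s => 0 < (i : ℕ) ∧ 1 ≤ L i)
        = Finset.univ.filter fun i : Fin s => Pp L i := by
      apply Finset.ext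
      intro x
      simp [Pp]
    rw [← Finset.prod_filter_mul_prod_filter_not Finset.univ (fun i => Pp L i)]
    rw [hsplit, Finset.prod_insert hi0notin, hre]
    have b1 : (∏ i ∈ Finset.univ.filter fun i : Fin s => Pp L i,
        Nat.card (Fin (aaf n k L i) × (Fin k → Fin k × Fin (ccf L i)) ×
          (Fin (mmf L i) → Fin s × Fin k) ×
          (Fin (eef k π L i) → {x : ZMod n // x ∈ dset n b})))
        ≤ ∏ i ∈ Finset.univ.filter fun i : Fin s => Pp L i,
            (2 * k) ^ k * k * (k * s) ^ (L i) * b ^ (N - L i) := by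
      apply Finset.prod_le_prod'
      intro i hi
      rw [hcardC i]
      exact hfacP i (Finset.mem_filter.mp hi).2
    have b2 : (Nat.card (Fin (aaf n k L i0) × (Fin k → Fin k × Fin (ccf L i0)) ×
          (Fin (mmf L i0) → Fin s × Fin k) ×
          (Fin (eef k π L i0) → {x : ZMod n // x ∈ dset n b}))) ≤ A := by
      rw [hcardC i0]
      exact hfacN i0 hPi0
    have b3 : (∏ i ∈ Finset.univ.filter fun i : Fin s => 0 < (i : ℕ) ∧ L i = 0,
        Nat.card (Fin (aaf n k L i) × (Fin k → Fin k × Fin (ccf L i)) ×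
          (Fin (mmf L i) → Fin s × Fin k) ×
          (Fin (eef k π L i) → {x : ZMod n // x ∈ dset n b})))
        ≤ ∏ _i ∈ Finset.univ.filter fun i : Fin s => 0 < (i : ℕ) ∧ L i = 0, A := by
      apply Finset.prod_le_prod'
      intro i hi
      rw [hcardC i]
      refine hfacN i ?_
      have := (Finset.mem_filter.mp hi).2
      rw [Pp]
      omega
    calc (∏ i ∈ Finset.univ.filter fun i : Fin s => Pp L i,
          Nat.card (Fin (aaf n k L i) × (Fin k → Fin k × Fin (ccf L i)) ×
            (Fin (mmf L i) → Fin s × Fin k) ×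
            (Fin (eef k π L i) → {x : ZMod n // x ∈ dset n b}))) *
        ((Nat.card (Fin (aaf n k L i0) × (Fin k → Fin k × Fin (ccf L i0)) ×
          (Fin (mmf L i0) → Fin s × Fin k) ×
          (Fin (eef k π L i0) → {x : ZMod n // x ∈ dset n b}))) *
          ∏ i ∈ Finset.univ.filter fun i : Fin s => 0 < (i : ℕ) ∧ L i = 0,
            Nat.card (Fin (aaf n k L i) × (Fin k → Fin k × Fin (ccf L i)) ×
              (Fin (mmf L i) → Fin s × Fin k) ×
              (Fin (eef k π L i) → {x : ZMod n // x ∈ dset n b})))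
        ≤ (∏ i ∈ Finset.univ.filter fun i : Fin s => Pp L i,
            (2 * k) ^ k * k * (k * s) ^ (L i) * b ^ (N - L i)) *
          (A * ∏ _i ∈ Finset.univ.filter fun i : Fin s => 0 < (i : ℕ) ∧ L i = 0, A) :=
          Nat.mul_le_mul b1 (Nat.mul_le_mul b2 b3)
      _ = A * (∏ _i ∈ Finset.univ.filter fun i : Fin s => 0 < (i : ℕ) ∧ L i = 0, A) *
          (∏ i ∈ Finset.univ.filter fun i : Fin s => Pp L i,
            (2 * k) ^ k * k * (k * s) ^ (L i) * b ^ (N - L i)) := by ring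
      _ = _ := by congr 1
  calc Nat.card ↥(TprofOv n b k s π L) ≤ _ := hbound
    _ ≤ _ := hprodsplit
end
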